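/- arXiv:1909.11884 — 2 statements merged into one kernel-verified Lean document; each statement's English description precedes it below -/
import Mathlib

section
/- Let d > 2 and let P be a convex polytope in S^d, i.e., a convex body in S^d that is an intersection of finitely many closed hemispheres. Then there exist a point x in the interior of P and d+1 open hemispheres of S^d whose boundary great spheres all contain x, such that every proper face of P is contained in at least one of the d+1 open hemispheres. -/
open RealInnerProductSpace Metric Set

noncomputable section

/-- Euclidean `n`-space. -/
abbrev Euc (n : ℕ) := EuclideanSpace ℝ (Fin n)

/-- The unit sphere `S^d` in `ℝ^{d+1}`. -/
def uSphere (d : ℕ) : Set (Euc (d + 1)) := Metric.sphere 0 1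

/-- Radial (normalizing) projection onto the unit sphere. -/
def nproj {n : ℕ} (x : Euc n) : Euc n := ‖x‖⁻¹ • x

/-- The spherical segment (shorter great-circle arc) with endpoints `p` and `q`
(meaningful when `p ≠ -q`). -/
def sphSeg {n : ℕ} (p q : Euc n) : Set (Euc n) :=
  (fun t : ℝ => nproj ((1 - t) • p + t • q)) '' Set.Icc 0 1

/-- The relative interior of the spherical segment with endpoints `p` and `q`. -/
def sphOpenSeg {n : ℕ} (p q : Euc n) : Set (Euc n) :=
  (fun t : ℝ => nproj ((1 - t) • p + t • q)) '' Set.Ioo 0 1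

/-- The great circle through `p` and `q`. -/
def greatCircle (d : ℕ) (p q : Euc (d + 1)) : Set (Euc (d + 1)) :=
  {z ∈ uSphere d | z ∈ Submodule.span ℝ {p, q}}

/-- The open hemisphere with center `x`. -/
def openHemi (d : ℕ) (x : Euc (d + 1)) : Set (Euc (d + 1)) :=
  {y ∈ uSphere d | 0 < ⟪x, y⟫}

/-- The `(d-1)`-dimensional great sphere of `S^d` with pole `u`. -/
def greatSphere (d : ℕ) (u : Euc (d + 1)) : Set (Euc (d + 1)) :=
  {y ∈ uSphere d | ⟪u, y⟫ = 0}

/-- A set `C ⊆ S^d` is spherically convex if it is contained in an open hemisphere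
and contains the shorter arc connecting any two of its points. -/
def SphConvex (d : ℕ) (C : Set (Euc (d + 1))) : Prop :=
  C ⊆ uSphere d ∧ (∃ x ∈ uSphere d, C ⊆ openHemi d x) ∧
    ∀ p ∈ C, ∀ q ∈ C, sphSeg p q ⊆ C

/-- The interior of `K` relative to the sphere `S^d`. -/
def sphInt (d : ℕ) (K : Set (Euc (d + 1))) : Set (Euc (d + 1)) :=
  {x ∈ uSphere d | ∃ U : Set (Euc (d + 1)), IsOpen U ∧ x ∈ U ∧ U ∩ uSphere d ⊆ K}

/-- The boundary of a closed set `K ⊆ S^d` relative to the sphere `S^d`. -/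
def sphBd (d : ℕ) (K : Set (Euc (d + 1))) : Set (Euc (d + 1)) := K \ sphInt d K

/-- A convex body in `S^d`: a compact spherically convex set with nonempty interior
relative to `S^d`. -/
def IsSphBody (d : ℕ) (K : Set (Euc (d + 1))) : Prop :=
  IsCompact K ∧ SphConvex d K ∧ (sphInt d K).Nonempty

/-- The boundary point `q` of `K` is illuminated from the point `p`. -/
def SphIlluminated (d : ℕ) (K : Set (Euc (d + 1))) (p q : Euc (d + 1)) : Prop :=
  q ≠ -p ∧ sphSeg p q ∩ sphInt d K = ∅ ∧ (greatCircle d p q ∩ sphInt d K).Nonempty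

/-- The set `S` illuminates the convex body `K ⊆ S^d`. -/
def SphIlluminates (d : ℕ) (K S : Set (Euc (d + 1))) : Prop :=
  ∀ q ∈ sphBd d K, ∃ p ∈ S, SphIlluminated d K p q

/-- The illumination number of a convex body `K` in `S^d`: the smallest cardinality of
a set illuminating `K` and lying on a `(d-1)`-dimensional great sphere disjoint from `K`. -/
def sphIllumNumber (d : ℕ) (K : Set (Euc (d + 1))) : ℕ∞ :=
  sInf {n : ℕ∞ | ∃ u ∈ uSphere d, greatSphere d u ∩ K = ∅ ∧
    ∃ S : Finset (Euc (d + 1)), ↑S ⊆ greatSphere d u ∧ SphIlluminates d K ↑S ∧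
      (S.card : ℕ∞) = n}

/-- A convex body in a Euclidean space: compact, convex, with nonempty interior. -/
def IsConvexBody {n : ℕ} (K : Set (Euc n)) : Prop :=
  IsCompact K ∧ Convex ℝ K ∧ (interior K).Nonempty

/-- The boundary point `p` of `K` is illuminated from the direction `v`. -/
def IlluminatedDir {n : ℕ} (K : Set (Euc n)) (v p : Euc n) : Prop :=
  ∃ t : ℝ, 0 < t ∧ p + t • v ∈ interior K

/-- The finite set of unit vectors `D` illuminates the convex body `K`. -/
def IlluminatesDirs {n : ℕ} (D : Finset (Euc n)) (K : Set (Euc n)) : Prop :=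
  (∀ v ∈ D, ‖v‖ = 1) ∧ ∀ p ∈ frontier K, ∃ v ∈ D, IlluminatedDir K v p

/-- The illumination number of a convex body in Euclidean space. -/
def illumNumber {n : ℕ} (K : Set (Euc n)) : ℕ∞ :=
  sInf {m : ℕ∞ | ∃ D : Finset (Euc n), IlluminatesDirs D K ∧ (D.card : ℕ∞) = m}

/-- The illumination number of a convex body `K` of an affine subspace of a Euclidean
space, computed within the affine span of `K` (directions are parallel to the affine
span; interior and boundary are relative to the affine span). -/
def intIllumNumber {n : ℕ} (K : Set (Euc n)) : ℕ∞ :=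
  sInf {m : ℕ∞ | ∃ D : Finset (Euc n),
    (∀ v ∈ D, ‖v‖ = 1 ∧ v ∈ (affineSpan ℝ K).direction) ∧
    (∀ p ∈ intrinsicFrontier ℝ K, ∃ v ∈ D, ∃ t : ℝ, 0 < t ∧
      p + t • v ∈ intrinsicInterior ℝ K) ∧
    (D.card : ℕ∞) = m}

/-- A face of a convex body `K` in Euclidean space: a convex subset `F ⊆ K` such that
any segment of `K` whose relative interior meets `F` is contained in `F`. -/
def IsFace {n : ℕ} (K F : Set (Euc n)) : Prop :=
  F ⊆ K ∧ Convex ℝ F ∧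
    ∀ x ∈ K, ∀ y ∈ K, (openSegment ℝ x y ∩ F).Nonempty → segment ℝ x y ⊆ F

/-- The dimension of a subset of a Euclidean space (dimension of its affine hull). -/
def faceDim {n : ℕ} (F : Set (Euc n)) : ℕ := Module.finrank ℝ (vectorSpan ℝ F)

/-- A face of a convex body `K` in `S^d`: a spherically convex subset `F ⊆ K` such that
any spherical segment of `K` whose relative interior meets `F` is contained in `F`. -/
def IsSphFace (d : ℕ) (K F : Set (Euc (d + 1))) : Prop :=
  F ⊆ K ∧ SphConvex d F ∧
    ∀ p ∈ K, ∀ q ∈ K, (sphOpenSeg p q ∩ F).Nonempty → sphSeg p q ⊆ F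

/-- The (spherical) dimension of a subset `F` of `S^d`: one less than the dimension of
its linear hull. -/
def sphFaceDim (d : ℕ) (F : Set (Euc (d + 1))) : ℕ :=
  Module.finrank ℝ (Submodule.span ℝ F) - 1

/-- The polar body of a convex body `K ⊆ S^d`. -/
def sphPolar (d : ℕ) (K : Set (Euc (d + 1))) : Set (Euc (d + 1)) :=
  {x ∈ uSphere d | ∀ y ∈ K, ⟪x, y⟫ ≤ 0}

/-- An exposed face of a convex body `L` in `S^d`: a nonempty intersection of `L`
with a supporting great sphere. -/
def IsSphExposedFace (d : ℕ) (L F : Set (Euc (d + 1))) : Prop :=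
  F.Nonempty ∧ ∃ u ∈ uSphere d, (∀ y ∈ L, ⟪u, y⟫ ≤ 0) ∧ F = {y ∈ L | ⟪u, y⟫ = 0}

/-- The conjugate face of an exposed face `F` of a convex body `K ⊆ S^d`. -/
def conjFace (d : ℕ) (K F : Set (Euc (d + 1))) : Set (Euc (d + 1)) :=
  {x ∈ sphPolar d K | ∀ y ∈ F, ⟪x, y⟫ = 0}

/-- Two Euclidean convex bodies are combinatorially equivalent if there is a
homeomorphism between their boundaries mapping faces to faces. -/
def CombEquiv {n : ℕ} (K K' : Set (Euc n)) : Prop :=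
  ∃ h : (frontier K) ≃ₜ (frontier K'),
    ∀ X : Set (frontier K),
      IsFace K (Subtype.val '' X) ↔ IsFace K' (Subtype.val '' (h '' X))

/-- The combinatorial illumination number of a Euclidean convex body `K`: the smallest
number of directions that illuminate some convex body combinatorially equivalent to `K`. -/
def combIllumNumber {n : ℕ} (K : Set (Euc n)) : ℕ∞ :=
  sInf {m : ℕ∞ | ∃ K' : Set (Euc n), IsConvexBody K' ∧ CombEquiv K K' ∧
    ∃ D : Finset (Euc n), IlluminatesDirs D K' ∧ (D.card : ℕ∞) = m}

/-- A convex polytope in `S^d`: a convex body that is the intersection of finitely many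
closed hemispheres. -/
def IsSphPolytope (d : ℕ) (P : Set (Euc (d + 1))) : Prop :=
  IsSphBody d P ∧ ∃ s : Finset (Euc (d + 1)), (∀ u ∈ s, u ∈ uSphere d) ∧
    P = uSphere d ∩ {y | ∀ u ∈ s, ⟪u, y⟫ ≤ 0}

end



set_option maxHeartbeats 2000000
set_option linter.unusedSectionVars false

open Module

section AuxCore

variable {V : Type} [NormedAddCommGroup V] [InnerProductSpace ℝ V]

/-- Mixing lemma: if `φ ≥ 0` on compact `B` and `ψ > 0` wherever `φ = 0`, then
`φ + a • ψ > 0` on `B` for all sufficiently small positive `a`. -/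
lemma posmix {B : Set V} (hB : IsCompact B) {φ ψ : V → ℝ} (hφ : Continuous φ)
    (hψ : Continuous ψ) (h0 : ∀ z ∈ B, 0 ≤ φ z) (h1 : ∀ z ∈ B, φ z = 0 → 0 < ψ z) :
    ∃ a₀ : ℝ, 0 < a₀ ∧ ∀ a : ℝ, 0 < a → a ≤ a₀ → ∀ z ∈ B, 0 < φ z + a * ψ z := by
  set S : Set V := B ∩ ψ ⁻¹' (Iic 0) with hS
  have hScomp : IsCompact S := hB.inter_right (isClosed_Iic.preimage hψ)
  rcases S.eq_empty_or_nonempty with hSe | hSne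
  · refine ⟨1, one_pos, fun a ha _ z hz => ?_⟩
    have hzS : z ∉ S := by rw [hSe]; exact notMem_empty z
    have : 0 < ψ z := by
      by_contra hcon
      exact hzS ⟨hz, by simpa using le_of_not_gt hcon⟩
    have := h0 z hz
    nlinarith
  · obtain ⟨z₀, hz₀S, hz₀min⟩ := hScomp.exists_isMinOn hSne hφ.continuousOn
    obtain ⟨z₁, hz₁S, hz₁max⟩ := hScomp.exists_isMaxOn hSne (hψ.neg.continuousOn)
    set δ := φ z₀ with hδ
    set M := -ψ z₁ with hM
    have hδpos : 0 < δ := by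
      rcases lt_or_eq_of_le (h0 z₀ hz₀S.1) with h | h
      · exact h
      · exfalso
        have := h1 z₀ hz₀S.1 h.symm
        have := hz₀S.2
        simp only [mem_preimage, mem_Iic] at this
        linarith
    have hM0 : 0 ≤ M := by
      have := hz₁S.2
      simp only [mem_preimage, mem_Iic] at this
      simpa [hM] using this
    refine ⟨δ / (M + 1), by positivity, fun a ha haM z hz => ?_⟩
    by_cases hzS : z ∈ S
    · have h₁ : δ ≤ φ z := hz₀min hzS
      have h₂ : -ψ z ≤ M := hz₁max hzS
      have h₃ : a * (-ψ z) ≤ a * M := by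
        apply mul_le_mul_of_nonneg_left h₂ (le_of_lt ha)
      have h₄ : a * M ≤ δ / (M + 1) * M := by
        apply mul_le_mul_of_nonneg_right haM hM0
      have h₅ : δ / (M + 1) * M < δ := by
        rw [div_mul_eq_mul_div, div_lt_iff₀ (by linarith)]
        nlinarith
      nlinarith
    · have : 0 < ψ z := by
        by_contra hcon
        exact hzS ⟨hz, by simpa using le_of_not_gt hcon⟩
      have := h0 z hz
      nlinarith

lemma isCompact_convexJoin {s t : Set V} (hs : IsCompact s) (ht : IsCompact t) :
    IsCompact (convexJoin ℝ s t) := by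
  have heq : convexJoin ℝ s t =
      (fun p : ℝ × V × V => (1 - p.1) • p.2.1 + p.1 • p.2.2) ''
        (Icc (0:ℝ) 1 ×ˢ s ×ˢ t) := by
    ext w
    constructor
    · intro hw
      rw [mem_convexJoin] at hw
      obtain ⟨a, ha, b, hb, hab⟩ := hw
      rw [segment_eq_image] at hab
      obtain ⟨θ, hθ, habθ⟩ := hab
      exact ⟨(θ, a, b), ⟨hθ, ha, hb⟩, habθ⟩
    · rintro ⟨⟨θ, a, b⟩, ⟨hθ, ha, hb⟩, rfl⟩
      rw [mem_convexJoin]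
      refine ⟨a, ha, b, hb, ?_⟩
      rw [segment_eq_image]
      exact ⟨θ, hθ, rfl⟩
  rw [heq]
  apply IsCompact.image (isCompact_Icc.prod (hs.prod ht))
  fun_prop

lemma isCompact_convexHull_biUnion {ι : Type*} (t : Finset ι) (A : ι → Set V)
    (hA : ∀ i ∈ t, IsCompact (A i)) (hAc : ∀ i ∈ t, Convex ℝ (A i)) :
    IsCompact (convexHull ℝ (⋃ i ∈ t, A i)) := by
  classical
  induction t using Finset.induction_on with
  | empty => simp
  | @insert a t ha IH =>
    have hunion : (⋃ i ∈ insert a t, A i) = A a ∪ ⋃ i ∈ t, A i := by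
      simp [Set.biUnion_insert]
    rw [hunion]
    have IH' := IH (fun i hi => hA i (Finset.mem_insert_of_mem hi))
      (fun i hi => hAc i (Finset.mem_insert_of_mem hi))
    rcases (A a).eq_empty_or_nonempty with hAe | hAne
    · rw [hAe, Set.empty_union]; exact IH'
    rcases (⋃ i ∈ t, A i).eq_empty_or_nonempty with hUe | hUne
    · rw [hUe, Set.union_empty, (hAc a (Finset.mem_insert_self a t)).convexHull_eq]
      exact hA a (Finset.mem_insert_self a t)
    · rw [convexHull_union hAne hUne,
        (hAc a (Finset.mem_insert_self a t)).convexHull_eq]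
      exact isCompact_convexJoin (hA a (Finset.mem_insert_self a t)) IH'


/-- A pointed closed convex cone in a finite-dimensional space admits a strictly
positive functional. -/
lemma exists_pos_functional [FiniteDimensional ℝ V] (D : Set V)
    (hadd : ∀ x ∈ D, ∀ y ∈ D, x + y ∈ D)
    (hsmul : ∀ c : ℝ, 0 < c → ∀ x ∈ D, c • x ∈ D)
    (h0 : (0 : V) ∈ D) (hclosed : IsClosed D)
    (hpt : ∀ w ∈ D, -w ∈ D → w = 0) :
    ∃ cb : V, ∀ w ∈ D, w ≠ 0 → 0 < ⟪cb, w⟫ := by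
  classical
  set K : ConvexCone ℝ V :=
    { carrier := D
      smul_mem' := fun c hc x hx => hsmul c hc x hx
      add_mem' := fun x hx y hy => hadd x hx y hy } with hK
  have hKset : (K : Set V) = D := rfl
  set DD : Set V := (ProperCone.innerDual D : Set V) with hDD
  have hbidual : ((ProperCone.innerDual (ProperCone.innerDual D : Set V) : Set V)) = D := by
    let C : ProperCone ℝ V :=
      { carrier := D
        add_mem' := fun {x y} hx hy => hadd x hx y hy
        zero_mem' := h0
        smul_mem' := fun c x hx => by
          show (c : ℝ) • x ∈ D
          rcases eq_or_lt_of_le c.2 with h | h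
          · rw [← h, zero_smul]; exact h0
          · exact hsmul c h x hx
        isClosed' := hclosed }
    have := ProperCone.innerDual_innerDual C
    exact congrArg (fun K : ProperCone ℝ V => (K : Set V)) this
  -- the span of the dual cone is everything
  have hspan : Submodule.span ℝ DD = ⊤ := by
    by_contra hne
    have hbot : (Submodule.span ℝ DD)ᗮ ≠ ⊥ := by
      intro hb
      exact hne (Submodule.orthogonal_eq_bot_iff.mp hb)
    obtain ⟨a, haS, ha0⟩ := Submodule.exists_mem_ne_zero_of_ne_bot hbot
    have hdual : ∀ b : V, b ∈ DD → ∀ r : ℝ, r • a ∈ DD → True := fun _ _ _ _ => trivial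
    have haD : a ∈ D ∧ -a ∈ D := by
      constructor
      · rw [← hbidual, SetLike.mem_coe, ProperCone.mem_innerDual]
        intro v hv
        have : ⟪v, a⟫ = 0 :=
          (Submodule.mem_orthogonal _ a).mp haS v (Submodule.subset_span hv)
        rw [this]
      · rw [← hbidual, SetLike.mem_coe, ProperCone.mem_innerDual]
        intro v hv
        have : ⟪v, a⟫ = 0 :=
          (Submodule.mem_orthogonal _ a).mp haS v (Submodule.subset_span hv)
        rw [inner_neg_right, this, neg_zero]
    exact ha0 (hpt a haD.1 haD.2)
  -- pick a finite spanning subset of the dual cone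
  set bV := finBasis ℝ V with hbV
  have hmem : ∀ k, bV k ∈ Submodule.span ℝ DD := by
    intro k; rw [hspan]; exact Submodule.mem_top
  have hrep : ∀ k, ∃ cf : V →₀ ℝ, ↑cf.support ⊆ DD ∧ (cf.sum fun mi r => r • mi) = bV k := by
    intro k
    exact Submodule.mem_span_set.mp (hmem k)
  choose cf hcfsupp hcfsum using hrep
  set T : Finset V := Finset.univ.biUnion (fun k => (cf k).support) with hT
  have hTsub : (T : Set V) ⊆ DD := by
    intro v hv
    simp only [hT, Finset.coe_biUnion, Finset.mem_coe, Finset.mem_univ, Set.mem_iUnion] at hv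
    obtain ⟨k, _, hk⟩ := hv
    exact hcfsupp k hk
  refine ⟨∑ v ∈ T, v, fun w hw hw0 => ?_⟩
  have hterms : ∀ v ∈ T, 0 ≤ ⟪v, w⟫ := by
    intro v hv
    have hvDD : v ∈ DD := hTsub hv
    rw [hDD, SetLike.mem_coe, ProperCone.mem_innerDual] at hvDD
    have := hvDD hw
    rwa [real_inner_comm] at this
  rw [sum_inner]
  rcases lt_or_eq_of_le (Finset.sum_nonneg hterms) with h | h
  · exact h
  exfalso
  have hzero : ∀ v ∈ T, ⟪v, w⟫ = 0 := by
    intro v hv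
    exact (Finset.sum_eq_zero_iff_of_nonneg hterms).mp h.symm v hv
  have hbk : ∀ k, ⟪bV k, w⟫ = 0 := by
    intro k
    rw [← hcfsum k]
    rw [Finsupp.sum, sum_inner]
    apply Finset.sum_eq_zero
    intro v hv
    rw [real_inner_smul_left, hzero v (Finset.mem_biUnion.mpr ⟨k, Finset.mem_univ k, hv⟩),
      mul_zero]
  have hallv : ∀ v, v ∈ Submodule.span ℝ (Set.range ⇑bV) → ⟪v, w⟫ = 0 := by
    intro v hv
    induction hv using Submodule.span_induction with
    | mem v hv => obtain ⟨k, rfl⟩ := hv; exact hbk k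
    | zero => exact inner_zero_left w
    | add v v' _ _ hv hv' => rw [inner_add_left, hv, hv', add_zero]
    | smul r v _ hv => rw [real_inner_smul_left, hv, mul_zero]
  have hww : ⟪w, w⟫ = 0 := hallv w (by rw [bV.span_eq]; exact Submodule.mem_top)
  exact hw0 (inner_self_eq_zero.mp hww)


lemma rips {x : V} (hx : x ≠ 0) : 0 < ⟪x, x⟫ := by
  rw [real_inner_self_eq_norm_sq]
  have := norm_pos_iff.mpr hx
  positivity


lemma inner_cont (w : V) : Continuous fun z : V => ⟪w, z⟫ :=
  continuous_const.inner continuous_id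

lemma isClosed_coneSet (s : Finset V) : IsClosed {z : V | ∀ u ∈ s, ⟪u, z⟫ ≤ 0} := by
  have h : {z : V | ∀ u ∈ s, ⟪u, z⟫ ≤ 0} = ⋂ u ∈ s, {z : V | ⟪u, z⟫ ≤ 0} := by
    ext z; simp
  rw [h]
  exact isClosed_biInter fun u _ => isClosed_le (inner_cont u) continuous_const

end AuxCore


theorem coreCone (n : ℕ) : ∀ (V : Type) [NormedAddCommGroup V] [InnerProductSpace ℝ V]
    [FiniteDimensional ℝ V], finrank ℝ V = n + 1 → ∀ s : Finset V, (∀ u ∈ s, ‖u‖ = 1) →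
    (∃ x₀ : V, ∀ u ∈ s, ⟪u, x₀⟫ < 0) →
    (∃ c : V, ∀ z : V, (∀ u ∈ s, ⟪u, z⟫ ≤ 0) → z ≠ 0 → 0 < ⟪c, z⟫) →
    ∃ x : V, x ≠ 0 ∧ (∀ u ∈ s, ⟪u, x⟫ < 0) ∧ ∃ ℓ : Fin (n + 1) → V,
      (∀ i, ⟪ℓ i, x⟫ = 0) ∧ ∀ u ∈ s, ∃ i, ∀ z : V,
        (∀ u' ∈ s, ⟪u', z⟫ ≤ 0) → ⟪u, z⟫ = 0 → z ≠ 0 → 0 < ⟪ℓ i, z⟫ := by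
  induction n with
  | zero =>
    intro V _ _ _ hrank s hunit hint _
    obtain ⟨x₀, hx₀⟩ := hint
    have hnt : Nontrivial V := nontrivial_of_finrank_pos (R := ℝ) (by omega)
    have hcover : ∀ u ∈ s, ∀ z : V, (∀ u' ∈ s, ⟪u', z⟫ ≤ 0) → ⟪u, z⟫ = 0 → z ≠ 0 →
        0 < ⟪(0 : V), z⟫ := by
      intro u hu z _ huz hz0
      exfalso
      have hspan : Submodule.span ℝ {z} = ⊤ := by
        apply Submodule.eq_top_of_finrank_eq
        rw [finrank_span_singleton hz0, hrank]
      have huz' : u ∈ Submodule.span ℝ {z} := by rw [hspan]; exact Submodule.mem_top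
      obtain ⟨r, rfl⟩ := Submodule.mem_span_singleton.mp huz'
      rw [real_inner_smul_left] at huz
      have hzz : 0 < ⟪z, z⟫ := rips hz0
      have hr : r = 0 := by
        rcases mul_eq_zero.mp huz with h | h
        · exact h
        · exact absurd h (ne_of_gt hzz)
      have := hunit (r • z) hu
      rw [hr, zero_smul, norm_zero] at this
      norm_num at this
    rcases s.eq_empty_or_nonempty with hs | hs
    · obtain ⟨x, hx⟩ := exists_ne (0 : V)
      exact ⟨x, hx, by simp [hs], fun _ => 0, fun i => inner_zero_left x,
        by simp [hs]⟩
    · have hx₀0 : x₀ ≠ 0 := by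
        intro h
        obtain ⟨u, hu⟩ := hs
        have := hx₀ u hu
        rw [h, inner_zero_right] at this
        norm_num at this
      exact ⟨x₀, hx₀0, hx₀, fun _ => 0, fun i => inner_zero_left x₀,
        fun u hu => ⟨0, hcover u hu⟩⟩
  | succ m ih =>
    intro V _ _ _ hrank s hunit hint hcone
    classical
    obtain ⟨x₀, hx₀⟩ := hint
    obtain ⟨c, hc⟩ := hcone
    set Cmem : V → Prop := fun z => ∀ u ∈ s, ⟪u, z⟫ ≤ 0 with hCmem
    have hnt : Nontrivial V := nontrivial_of_finrank_pos (R := ℝ) (by omega)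
    have hCadd : ∀ z z', Cmem z → Cmem z' → Cmem (z + z') := by
      intro z z' hz hz' u hu
      rw [inner_add_right]
      have := hz u hu; have := hz' u hu; linarith
    have hCsmul : ∀ (t : ℝ) z, 0 ≤ t → Cmem z → Cmem (t • z) := by
      intro t z ht hz u hu
      rw [real_inner_smul_right]
      exact mul_nonpos_of_nonneg_of_nonpos ht (hz u hu)
    have hC0 : Cmem 0 := fun u _ => by rw [inner_zero_right]
    -- a nonzero element of the cone
    have hz₀ : ∃ z₀ : V, Cmem z₀ ∧ z₀ ≠ 0 := by
      rcases s.eq_empty_or_nonempty with hse | hsne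
      · obtain ⟨z, hz⟩ := exists_ne (0 : V)
        exact ⟨z, by simp [hCmem, hse], hz⟩
      · refine ⟨x₀, fun u hu => le_of_lt (hx₀ u hu), ?_⟩
        intro h
        obtain ⟨u, hu⟩ := hsne
        have := hx₀ u hu
        rw [h, inner_zero_right] at this
        norm_num at this
    obtain ⟨z₀, hz₀C, hz₀0⟩ := hz₀
    -- the base of the cone
    set B : Set V := {z | Cmem z ∧ ⟪c, z⟫ = 1} with hB
    have hBconv : Convex ℝ B := by
      intro z hz z' hz' a b ha hb hab
      constructor
      · have h1 := hCsmul a z ha hz.1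
        have h2 := hCsmul b z' hb hz'.1
        exact hCadd _ _ h1 h2
      · rw [inner_add_right, real_inner_smul_right, real_inner_smul_right, hz.2, hz'.2]
        linarith
    have hBclosed : IsClosed B := by
      apply IsClosed.inter (isClosed_coneSet s)
      exact isClosed_eq (inner_cont c) continuous_const
    have hcz₀ : 0 < ⟪c, z₀⟫ := hc z₀ hz₀C hz₀0
    have hBne : B.Nonempty := by
      refine ⟨(⟪c, z₀⟫)⁻¹ • z₀, hCsmul _ _ (by positivity) hz₀C, ?_⟩
      rw [real_inner_smul_right]
      exact inv_mul_cancel₀ (ne_of_gt hcz₀)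
    -- B is compact
    set Ssph : Set V := {z | Cmem z ∧ ‖z‖ = 1} with hSsph
    have hSsphcomp : IsCompact Ssph := by
      apply IsCompact.of_isClosed_subset (isCompact_closedBall (0:V) 1)
      · exact (isClosed_coneSet s).inter (isClosed_eq continuous_norm continuous_const)
      · intro z hz
        rw [mem_closedBall, dist_zero_right, hz.2]
    have hSsphne : Ssph.Nonempty := by
      refine ⟨‖z₀‖⁻¹ • z₀, hCsmul _ _ (by positivity) hz₀C, ?_⟩
      rw [norm_smul, norm_inv, norm_norm]
      have : ‖z₀‖ ≠ 0 := norm_ne_zero_iff.mpr hz₀0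
      field_simp
    obtain ⟨zm, hzmS, hzmmin⟩ := hSsphcomp.exists_isMinOn hSsphne (inner_cont c).continuousOn
    have hm0 : 0 < ⟪c, zm⟫ := by
      apply hc zm hzmS.1
      intro h
      have h2 := hzmS.2
      rw [h, norm_zero] at h2
      norm_num at h2
    have hBsub : B ⊆ closedBall 0 (⟪c, zm⟫)⁻¹ := by
      intro z hz
      obtain ⟨hzC, hzc⟩ := hz
      have hz0 : z ≠ 0 := by
        intro h
        rw [h, inner_zero_right] at hzc
        norm_num at hzc
      have hzn : (0:ℝ) < ‖z‖ := norm_pos_iff.mpr hz0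
      have hmem : ‖z‖⁻¹ • z ∈ Ssph := by
        refine ⟨hCsmul _ _ (by positivity) hzC, ?_⟩
        rw [norm_smul, norm_inv, norm_norm]
        field_simp
      have hmin := hzmmin hmem
      simp only [mem_setOf_eq] at hmin
      rw [real_inner_smul_right, hzc, mul_one] at hmin
      have h3 : ‖z‖ * ⟪c, zm⟫ ≤ 1 := by
        have h4 := mul_le_mul_of_nonneg_left hmin (le_of_lt hzn)
        rwa [mul_inv_cancel₀ (ne_of_gt hzn)] at h4
      rw [mem_closedBall, dist_zero_right, ← one_div, le_div_iff₀ hm0]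
      exact h3
    have hBcomp : IsCompact B :=
      IsCompact.of_isClosed_subset (isCompact_closedBall _ _) hBclosed hBsub
    -- extreme point
    obtain ⟨p₀, hp₀ext⟩ := hBcomp.extremePoints_nonempty hBne
    rw [mem_extremePoints] at hp₀ext
    have hp₀B : p₀ ∈ B := hp₀ext.1
    have hp₀C : Cmem p₀ := hp₀B.1
    have hp₀c : ⟪c, p₀⟫ = 1 := hp₀B.2
    have hp₀0 : p₀ ≠ 0 := by
      intro h
      rw [h, inner_zero_right] at hp₀c
      norm_num at hp₀c
    -- binary extremality of the ray through p₀
    have hray : ∀ z z' : V, Cmem z → Cmem z' → ∀ t : ℝ, z + z' = t • p₀ →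
        ∃ α : ℝ, 0 ≤ α ∧ z = α • p₀ := by
      intro z z' hz hz' t hsum
      by_cases hz0 : z = 0
      · exact ⟨0, le_refl 0, by rw [hz0, zero_smul]⟩
      by_cases hz'0 : z' = 0
      · have : z = t • p₀ := by rw [hz'0, add_zero] at hsum; exact hsum
        refine ⟨t, ?_, this⟩
        have h1 : 0 < ⟪c, z⟫ := hc z hz hz0
        rw [this, real_inner_smul_right, hp₀c, mul_one] at h1
        exact le_of_lt h1
      have ha : 0 < ⟪c, z⟫ := hc z hz hz0
      have hb : 0 < ⟪c, z'⟫ := hc z' hz' hz'0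
      have ht : t = ⟪c, z⟫ + ⟪c, z'⟫ := by
        have : ⟪c, z + z'⟫ = ⟪c, t • p₀⟫ := by rw [hsum]
        rw [inner_add_right, real_inner_smul_right, hp₀c, mul_one] at this
        linarith
      have htpos : 0 < t := by rw [ht]; linarith
      have hmem1 : (⟪c, z⟫)⁻¹ • z ∈ B := by
        refine ⟨hCsmul _ _ (by positivity) hz, ?_⟩
        rw [real_inner_smul_right]; exact inv_mul_cancel₀ (ne_of_gt ha)
      have hmem2 : (⟪c, z'⟫)⁻¹ • z' ∈ B := by
        refine ⟨hCsmul _ _ (by positivity) hz', ?_⟩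
        rw [real_inner_smul_right]; exact inv_mul_cancel₀ (ne_of_gt hb)
      have hseg : p₀ ∈ openSegment ℝ ((⟪c, z⟫)⁻¹ • z) ((⟪c, z'⟫)⁻¹ • z') := by
        refine ⟨⟪c, z⟫ / t, ⟪c, z'⟫ / t, by positivity, by positivity, ?_, ?_⟩
        · rw [← add_div, ← ht, div_self (ne_of_gt htpos)]
        · have h1 : ⟪c, z⟫ / t * (⟪c, z⟫)⁻¹ = t⁻¹ := by field_simp
          have h2 : ⟪c, z'⟫ / t * (⟪c, z'⟫)⁻¹ = t⁻¹ := by field_simp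
          rw [smul_smul, smul_smul, h1, h2, ← smul_add, hsum, smul_smul,
            inv_mul_cancel₀ (ne_of_gt htpos), one_smul]
      obtain ⟨h1, _⟩ := hp₀ext.2 _ hmem1 _ hmem2 hseg
      refine ⟨⟪c, z⟫, le_of_lt ha, ?_⟩
      rw [← h1, smul_smul, mul_inv_cancel₀ (ne_of_gt ha), one_smul]
    -- finite sum extremality
    have hraysum : ∀ {ι : Type} (t : Finset ι) (f : ι → V), (∀ i ∈ t, Cmem (f i)) →
        ∀ μ : ℝ, (∑ i ∈ t, f i) = μ • p₀ → ∀ i ∈ t, ∃ α : ℝ, 0 ≤ α ∧ f i = α • p₀ := by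
      intro ι t
      induction t using Finset.induction_on with
      | empty => intro f _ μ _ i hi; exact absurd hi (Finset.notMem_empty i)
      | @insert a t ha IH =>
        intro f hf μ hsum i hi
        have hsumC : Cmem (∑ j ∈ t, f j) := by
          apply Finset.sum_induction f Cmem hCadd hC0
          intro j hj; exact hf j (Finset.mem_insert_of_mem hj)
        rw [Finset.sum_insert ha] at hsum
        rcases Finset.mem_insert.mp hi with rfl | hit
        · exact hray (f i) (∑ j ∈ t, f j) (hf i hi) hsumC μ hsum
        · obtain ⟨α, hα0, hα⟩ := hray (∑ j ∈ t, f j) (f a)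
            hsumC (hf a (Finset.mem_insert_self a t)) μ (by rw [← hsum]; exact add_comm _ _)
          exact IH f (fun j hj => hf j (Finset.mem_insert_of_mem hj)) α hα i hit
    -- the orthogonal complement of p₀
    set W : Submodule ℝ V := (ℝ ∙ p₀)ᗮ with hW
    have hWrank : finrank ℝ W = m + 1 := by
      have h1 := Submodule.finrank_add_finrank_orthogonal (K := (ℝ ∙ p₀ : Submodule ℝ V))
      rw [finrank_span_singleton hp₀0, hrank, ← hW] at h1
      omega
    set π := W.orthogonalProjectionOnto with hπdef
    have hWo : Wᗮ = (ℝ ∙ p₀ : Submodule ℝ V) := Submodule.orthogonal_orthogonal _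
    have hπu : ∀ u : V, u ∈ W → ∀ z : V, ⟪u, (π z : V)⟫ = ⟪u, z⟫ := by
      intro u hu z
      have hzW : z - ↑(π z) ∈ Wᗮ := W.sub_starProjection_mem_orthogonal z
      have h := Submodule.inner_right_of_mem_orthogonal hu hzW
      rw [inner_sub_right] at h
      linarith
    have hπ0 : ∀ z : V, (π z : V) = 0 → ∃ τ : ℝ, z = τ • p₀ := by
      intro z h
      have h1 : z - ↑(π z) ∈ Wᗮ := W.sub_starProjection_mem_orthogonal z
      rw [h, sub_zero, hWo, Submodule.mem_span_singleton] at h1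
      obtain ⟨τ, hτ⟩ := h1
      exact ⟨τ, hτ.symm⟩
    have hp₀Wo : p₀ ∈ Wᗮ := by
      rw [hWo]; exact Submodule.mem_span_singleton_self p₀
    have hπp₀ : π p₀ = 0 :=
      Submodule.orthogonalProjectionOnto_apply_of_mem_orthogonal hp₀Wo
    have hπcoe : ∀ w : W, π (w : V) = w := fun w =>
      Submodule.orthogonalProjectionOnto_mem_subspace_eq_self w
    -- the two groups of constraints
    set s₀ : Finset V := s.filter (fun u => ⟪u, p₀⟫ = 0) with hs₀
    set sA : Finset V := s.filter (fun u => ⟪u, p₀⟫ ≠ 0) with hsAdef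
    have hsA : ∀ u ∈ sA, ⟪u, p₀⟫ < 0 := by
      intro u hu
      rw [hsAdef, Finset.mem_filter] at hu
      exact lt_of_le_of_ne (hp₀C u hu.1) hu.2
    have hmemW : ∀ u ∈ s₀, u ∈ W := by
      intro u hu
      rw [hW, Submodule.mem_orthogonal]
      intro v hv
      obtain ⟨t, rfl⟩ := Submodule.mem_span_singleton.mp hv
      rw [real_inner_smul_left]
      have h : ⟪u, p₀⟫ = 0 := (Finset.mem_filter.mp hu).2
      rw [real_inner_comm] at h
      rw [h, mul_zero]
    set sbar : Finset W := s₀.attach.image (fun u => (⟨u.1, hmemW u.1 u.2⟩ : W)) with hsbar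
    have hsbarmem : ∀ u (hu : u ∈ s₀), (⟨u, hmemW u hu⟩ : W) ∈ sbar := by
      intro u hu
      rw [hsbar]
      exact Finset.mem_image.mpr ⟨⟨u, hu⟩, Finset.mem_attach _ _, rfl⟩
    have hsbarunit : ∀ ub ∈ sbar, ‖ub‖ = 1 := by
      intro ub hub
      rw [hsbar, Finset.mem_image] at hub
      obtain ⟨⟨u, hu⟩, _, rfl⟩ := hub
      have : ‖(⟨u, hmemW u hu⟩ : W)‖ = ‖u‖ := rfl
      rw [this]
      exact hunit u (Finset.mem_filter.mp hu).1
    -- interior point for the quotient problem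
    have hsbarint : ∃ xb₀ : W, ∀ ub ∈ sbar, ⟪ub, xb₀⟫ < 0 := by
      refine ⟨π x₀, ?_⟩
      intro ub hub
      rw [hsbar, Finset.mem_image] at hub
      obtain ⟨⟨u, hu⟩, _, rfl⟩ := hub
      have h1 : ⟪(⟨u, hmemW u hu⟩ : W), π x₀⟫ = ⟪u, (π x₀ : V)⟫ := rfl
      rw [h1, hπu u (hmemW u hu) x₀]
      exact hx₀ u (Finset.mem_filter.mp hu).1
    -- pointedness / positive functional for the quotient problem
    set D : Set W := {w | ∀ ub ∈ sbar, ⟪ub, w⟫ ≤ 0} with hD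
    have hlift : ∀ w ∈ D, ∃ z : V, Cmem z ∧ π z = w := by
      intro w hw
      set t₀ := (insert (0:ℝ) (sA.image fun u => ⟪u, (w:V)⟫ / (-⟪u, p₀⟫))).max'
        (Finset.insert_nonempty _ _) with ht₀def
      have ht₀ : ∀ u ∈ sA, ⟪u, (w:V)⟫ / (-⟪u, p₀⟫) ≤ t₀ := by
        intro u hu
        exact Finset.le_max' _ _ (Finset.mem_insert_of_mem
          (Finset.mem_image_of_mem (fun u => ⟪u, (w:V)⟫ / (-⟪u, p₀⟫)) hu))
      refine ⟨(w : V) + t₀ • p₀, ?_, ?_⟩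
      · intro u hu
        by_cases h : ⟪u, p₀⟫ = 0
        · have hu₀ : u ∈ s₀ := Finset.mem_filter.mpr ⟨hu, h⟩
          rw [inner_add_right, real_inner_smul_right, h, mul_zero, add_zero]
          exact hw _ (hsbarmem u hu₀)
        · have husA : u ∈ sA := Finset.mem_filter.mpr ⟨hu, h⟩
          have hneg : ⟪u, p₀⟫ < 0 := hsA u husA
          have h3 := ht₀ u husA
          rw [div_le_iff₀ (by linarith : (0:ℝ) < -⟪u, p₀⟫)] at h3
          rw [inner_add_right, real_inner_smul_right]
          nlinarith
      · rw [map_add, map_smul, hπp₀, hπcoe, smul_zero, add_zero]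
    have hDpt : ∀ w ∈ D, -w ∈ D → w = 0 := by
      intro w hw hw'
      obtain ⟨z₁, hz₁C, hz₁π⟩ := hlift w hw
      obtain ⟨z₂, hz₂C, hz₂π⟩ := hlift (-w) hw'
      have hπsum : π (z₁ + z₂) = 0 := by
        rw [map_add, hz₁π, hz₂π, add_neg_cancel]
      obtain ⟨τ, hτ⟩ := hπ0 _ (by rw [hπsum]; simp)
      obtain ⟨α, _, hα⟩ := hray z₁ z₂ hz₁C hz₂C τ hτ
      have : π z₁ = 0 := by
        rw [hα, map_smul, hπp₀, smul_zero]
      rw [hz₁π] at this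
      exact this
    have hDc : ∃ cb : W, ∀ w ∈ D, w ≠ 0 → 0 < ⟪cb, w⟫ := by
      apply exists_pos_functional D
      · intro x hx y hy ub hub
        rw [inner_add_right]
        have := hx ub hub; have := hy ub hub; linarith
      · intro t ht x hx ub hub
        rw [real_inner_smul_right]
        exact mul_nonpos_of_nonneg_of_nonpos (le_of_lt ht) (hx ub hub)
      · intro ub _; rw [inner_zero_right]
      · exact isClosed_coneSet sbar
      · exact hDpt
    obtain ⟨cb, hcb⟩ := hDc
    -- apply the induction hypothesis
    obtain ⟨xb, hxb0, hxbs, lb, hlbx, hlbcov⟩ := ih W hWrank sbar hsbarunit hsbarint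
      ⟨cb, fun w hw hw0 => hcb w hw hw0⟩
    set xv : V := (xb : V) with hxv
    have hxv0 : xv ≠ 0 := fun h => hxb0 (by exact_mod_cast Subtype.ext h)
    have hp₀xv : ⟪p₀, xv⟫ = 0 := by
      have := Submodule.inner_right_of_mem_orthogonal (K := (ℝ ∙ p₀ : Submodule ℝ V))
        (Submodule.mem_span_singleton_self p₀) xb.2
      exact this
    -- group A data
    set BA : V → Set V := fun u => {z ∈ B | ⟪u, z⟫ = 0} with hBA
    have hBAcomp : ∀ u : V, IsCompact (BA u) := by
      intro u
      apply IsCompact.of_isClosed_subset hBcomp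
      · exact hBclosed.inter (isClosed_eq (inner_cont u) continuous_const)
      · exact fun z hz => hz.1
    have hBAconv : ∀ u : V, Convex ℝ (BA u) := by
      intro u
      apply hBconv.inter
      intro z hz z' hz' a b _ _ hab
      have hz1 : ⟪u, z⟫ = 0 := hz
      have hz2 : ⟪u, z'⟫ = 0 := hz'
      show ⟪u, a • z + b • z'⟫ = 0
      rw [inner_add_right, real_inner_smul_right, real_inner_smul_right, hz1, hz2]
      ring
    set KA : Set V := convexHull ℝ (⋃ u ∈ sA, BA u) with hKA
    have hKAcomp : IsCompact KA :=
      isCompact_convexHull_biUnion sA BA (fun u _ => hBAcomp u) (fun u _ => hBAconv u)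
    have hKAc1 : ∀ z ∈ KA, ⟪c, z⟫ = 1 := by
      intro z hz
      have hsub : KA ⊆ {z : V | ⟪c, z⟫ = 1} := by
        apply convexHull_min
        · intro y hy
          simp only [Set.mem_iUnion] at hy
          obtain ⟨u, _, hy⟩ := hy
          exact hy.1.2
        · intro y hy y' hy' a b _ _ hab
          simp only [mem_setOf_eq] at hy hy' ⊢
          rw [inner_add_right, real_inner_smul_right, real_inner_smul_right, hy, hy']
          linarith
      exact hsub hz
    have hKAsubC : ∀ z ∈ (⋃ u ∈ sA, BA u), Cmem z := by
      intro z hz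
      simp only [Set.mem_iUnion] at hz
      obtain ⟨u, _, hz⟩ := hz
      exact hz.1.1
    have hp₀KA : p₀ ∉ KA := by
      intro hmem
      obtain ⟨ι, hfin, zf, wf, hrange, _, hwpos, hwsum, hsum⟩ :=
        eq_pos_convex_span_of_mem_convexHull hmem
      have hne : Nonempty ι := by
        by_contra h
        rw [not_nonempty_iff] at h
        rw [Finset.univ_eq_empty, Finset.sum_empty] at hwsum
        norm_num at hwsum
      obtain ⟨i₀⟩ := hne
      have hterm : ∀ i ∈ Finset.univ, Cmem (wf i • zf i) := by
        intro i _
        exact hCsmul _ _ (le_of_lt (hwpos i)) (hKAsubC (zf i) (hrange ⟨i, rfl⟩))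
      obtain ⟨α, hα0, hα⟩ := hraysum Finset.univ (fun i => wf i • zf i) hterm 1
        (by rw [hsum, one_smul]) i₀ (Finset.mem_univ i₀)
      have hz₀mem := hrange (⟨i₀, rfl⟩ : zf i₀ ∈ Set.range zf)
      simp only [Set.mem_iUnion] at hz₀mem
      obtain ⟨u, husA, hzi⟩ := hz₀mem
      have hzfeq : zf i₀ = ((wf i₀)⁻¹ * α) • p₀ := by
        have h1 : (wf i₀)⁻¹ • (wf i₀ • zf i₀) = (wf i₀)⁻¹ • (α • p₀) := by rw [hα]
        rwa [smul_smul, smul_smul, inv_mul_cancel₀ (ne_of_gt (hwpos i₀)), one_smul] at h1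
      have hc1 : ⟪c, zf i₀⟫ = 1 := hzi.1.2
      rw [hzfeq, real_inner_smul_right, hp₀c, mul_one] at hc1
      rw [hc1, one_smul] at hzfeq
      have h0 : ⟪u, zf i₀⟫ = 0 := hzi.2
      rw [hzfeq] at h0
      have := hsA u husA
      linarith
    -- the compact truncated cone over KA
    set T : ℝ := 1 + |⟪c, xv⟫| with hT
    set Scone : Set V := (fun pr : ℝ × V => pr.1 • pr.2) '' ((Icc (0:ℝ) T) ×ˢ KA)
      with hScone
    have hSconecomp : IsCompact Scone := by
      apply IsCompact.image (isCompact_Icc.prod hKAcomp)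
      fun_prop
    have hp₀Scone : p₀ ∉ Scone := by
      rintro ⟨⟨t, k⟩, ⟨⟨ht0, htT⟩, hk⟩, heq⟩
      simp only at heq
      have ht0' : t ≠ 0 := by
        intro h
        rw [h, zero_smul] at heq
        exact hp₀0 heq.symm
      have htpos : 0 < t := lt_of_le_of_ne ht0 (Ne.symm ht0')
      have hck : ⟪c, k⟫ = 1 := hKAc1 k hk
      have : ⟪c, t • k⟫ = ⟪c, p₀⟫ := by rw [heq]
      rw [real_inner_smul_right, hck, mul_one, hp₀c] at this
      rw [this, one_smul] at heq
      rw [heq] at hk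
      exact hp₀KA hk
    obtain ⟨δ, hδ0, hδball⟩ := Metric.isOpen_iff.mp hSconecomp.isClosed.isOpen_compl p₀
      (by exact hp₀Scone : p₀ ∈ Sconeᶜ)
    -- choice of ε
    set εfin : Finset ℝ := insert (min (δ / (‖xv‖ + 1)) 1)
      (sA.image fun u => (-⟪u, p₀⟫) / (2 * (|⟪u, xv⟫| + 1))) with hεfin
    set ε : ℝ := εfin.min' (Finset.insert_nonempty _ _) with hε
    have hε0 : 0 < ε := by
      rw [hε, Finset.lt_min'_iff]
      intro b hb
      rw [hεfin, Finset.mem_insert] at hb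
      rcases hb with rfl | hb
      · apply lt_min (by positivity) one_pos
      · rw [Finset.mem_image] at hb
        obtain ⟨u, hu, rfl⟩ := hb
        have h5 := hsA u hu
        have h2 : (0:ℝ) < 2 * (|⟪u, xv⟫| + 1) := by positivity
        apply div_pos (by linarith) h2
    have hεle : ε ≤ min (δ / (‖xv‖ + 1)) 1 :=
      Finset.min'_le _ _ (Finset.mem_insert_self _ _)
    have hε1 : ε ≤ 1 := le_trans hεle (min_le_right _ _)
    have hεδ : ε ≤ δ / (‖xv‖ + 1) := le_trans hεle (min_le_left _ _)
    have hεu : ∀ u ∈ sA, ε ≤ (-⟪u, p₀⟫) / (2 * (|⟪u, xv⟫| + 1)) := by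
      intro u hu
      apply Finset.min'_le
      rw [hεfin]
      exact Finset.mem_insert_of_mem (Finset.mem_image_of_mem _ hu)
    -- the interior point x
    set x : V := p₀ + ε • xv with hx
    have hp₀x : ⟪p₀, x⟫ = ⟪p₀, p₀⟫ := by
      rw [hx, inner_add_right, real_inner_smul_right, hp₀xv, mul_zero, add_zero]
    have hp₀p₀ : 0 < ⟪p₀, p₀⟫ := rips hp₀0
    have hx0 : x ≠ 0 := by
      intro h
      rw [h, inner_zero_right] at hp₀x
      linarith
    have hxs : ∀ u ∈ s, ⟪u, x⟫ < 0 := by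
      intro u hu
      by_cases h : ⟪u, p₀⟫ = 0
      · have hu₀ : u ∈ s₀ := Finset.mem_filter.mpr ⟨hu, h⟩
        have h1 : ⟪u, xv⟫ < 0 := hxbs _ (hsbarmem u hu₀)
        rw [hx, inner_add_right, real_inner_smul_right, h, zero_add]
        exact mul_neg_of_pos_of_neg hε0 h1
      · have husA : u ∈ sA := Finset.mem_filter.mpr ⟨hu, h⟩
        have hneg : ⟪u, p₀⟫ < 0 := hsA u husA
        have h2 := hεu u husA
        have h3 : ε * ⟪u, xv⟫ ≤ ε * |⟪u, xv⟫| := by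
          apply mul_le_mul_of_nonneg_left (le_abs_self _) (le_of_lt hε0)
        have h4 : ε * |⟪u, xv⟫| ≤ (-⟪u, p₀⟫) / (2 * (|⟪u, xv⟫| + 1)) * |⟪u, xv⟫| := by
          apply mul_le_mul_of_nonneg_right h2 (abs_nonneg _)
        have h5 : (-⟪u, p₀⟫) / (2 * (|⟪u, xv⟫| + 1)) * |⟪u, xv⟫| < -⟪u, p₀⟫ := by
          rw [div_mul_eq_mul_div, div_lt_iff₀ (by positivity)]
          nlinarith [abs_nonneg (⟪u, xv⟫)]
        rw [hx, inner_add_right, real_inner_smul_right]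
        nlinarith
    have hxC : Cmem x := fun u hu => le_of_lt (hxs u hu)
    have hcx : 0 < ⟪c, x⟫ := hc x hxC hx0
    have hcxT : ⟪c, x⟫ ≤ T := by
      rw [hx, inner_add_right, real_inner_smul_right, hp₀c, hT]
      have h1 : ε * ⟪c, xv⟫ ≤ |⟪c, xv⟫| := by
        rcases le_or_gt 0 (⟪c, xv⟫) with h | h
        · calc ε * ⟪c, xv⟫ ≤ 1 * ⟪c, xv⟫ := by nlinarith
            _ ≤ |⟪c, xv⟫| := by rw [one_mul]; exact le_abs_self _
        · calc ε * ⟪c, xv⟫ ≤ 0 := by nlinarith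
            _ ≤ |⟪c, xv⟫| := abs_nonneg _
      linarith
    -- KA is disjoint from the line through x
    have hdisj : Disjoint KA ((ℝ ∙ x : Submodule ℝ V) : Set V) := by
      rw [Set.disjoint_left]
      intro z hzKA hzline
      obtain ⟨t, rfl⟩ := Submodule.mem_span_singleton.mp hzline
      have hc1 : ⟪c, t • x⟫ = 1 := hKAc1 _ hzKA
      rw [real_inner_smul_right] at hc1
      have ht0 : t ≠ 0 := by
        intro h; rw [h, zero_mul] at hc1; norm_num at hc1
      have htinv : t⁻¹ = ⟪c, x⟫ := by
        field_simp at hc1 ⊢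
        linarith
      have hxScone : x ∈ Scone := by
        refine ⟨(⟪c, x⟫, t • x), ⟨⟨le_of_lt hcx, hcxT⟩, hzKA⟩, ?_⟩
        simp only
        rw [smul_smul, ← htinv, inv_mul_cancel₀ ht0, one_smul]
      have hxball : x ∈ ball p₀ δ := by
        rw [mem_ball, dist_eq_norm, hx, add_sub_cancel_left, norm_smul,
          Real.norm_eq_abs, abs_of_pos hε0]
        have h1 : ε * ‖xv‖ < ε * (‖xv‖ + 1) := by nlinarith
        have h2 : ε * (‖xv‖ + 1) ≤ δ := by
          rw [← div_mul_cancel₀ δ (by positivity : (‖xv‖ + 1) ≠ 0)]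
          apply mul_le_mul_of_nonneg_right hεδ (by positivity)
        linarith
      exact (hδball hxball) hxScone
    -- separating functional for group A
    obtain ⟨f, α₁, β₁, hfKA, hαβ, hfline⟩ :=
      geometric_hahn_banach_compact_closed (convex_convexHull ℝ _) hKAcomp
        (ℝ ∙ x : Submodule ℝ V).convex
        (Submodule.closed_of_finiteDimensional _) hdisj
    have hfx : f x = 0 := by
      by_contra hne
      have h1 := hfline (((β₁ - 1) / f x) • x)
        (Submodule.smul_mem _ _ (Submodule.mem_span_singleton_self x))
      rw [map_smul, smul_eq_mul, div_mul_cancel₀ _ hne] at h1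
      linarith
    have hβ1 : β₁ < 0 := by
      have := hfline 0 (Submodule.zero_mem _)
      rw [map_zero] at this
      linarith
    set ℓ₀ : V := -((InnerProductSpace.toDual ℝ V).symm f) with hℓ₀
    have hℓ₀app : ∀ z : V, ⟪ℓ₀, z⟫ = -(f z) := by
      intro z
      rw [hℓ₀, inner_neg_left, InnerProductSpace.toDual_symm_apply]
    have hℓ₀x : ⟪ℓ₀, x⟫ = 0 := by rw [hℓ₀app, hfx, neg_zero]
    have hℓ₀cov : ∀ u ∈ sA, ∀ z : V, Cmem z → ⟪u, z⟫ = 0 → z ≠ 0 → 0 < ⟪ℓ₀, z⟫ := by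
      intro u hu z hzC hz0 hzne
      have hcz : 0 < ⟪c, z⟫ := hc z hzC hzne
      have hmem : (⟪c, z⟫)⁻¹ • z ∈ BA u := by
        constructor
        · constructor
          · exact hCsmul _ _ (by positivity) hzC
          · rw [real_inner_smul_right]; exact inv_mul_cancel₀ (ne_of_gt hcz)
        · rw [real_inner_smul_right, hz0, mul_zero]
      have hmemKA : (⟪c, z⟫)⁻¹ • z ∈ KA := by
        apply subset_convexHull ℝ _
        simp only [Set.mem_iUnion]
        exact ⟨u, hu, hmem⟩
      have h1 := hfKA _ hmemKA
      have h2 : 0 < ⟪ℓ₀, (⟪c, z⟫)⁻¹ • z⟫ := by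
        rw [hℓ₀app]
        linarith
      rw [real_inner_smul_right] at h2
      have hval2 := mul_pos hcz h2
      have heq : ⟪c, z⟫ * ((⟪c, z⟫)⁻¹ * ⟪ℓ₀, z⟫) = ⟪ℓ₀, z⟫ := by
        field_simp
      rw [heq] at hval2
      exact hval2
    -- the correction vector q
    have hxx : 0 < ⟪x, x⟫ := rips hx0
    set q : V := p₀ - (⟪p₀, x⟫ / ⟪x, x⟫) • x with hq
    have hqx : ⟪q, x⟫ = 0 := by
      rw [hq, inner_sub_left, real_inner_smul_left, div_mul_cancel₀ _ (ne_of_gt hxx),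
        sub_self]
    have hqp₀ : 0 < ⟪q, p₀⟫ := by
      have hxxval : ⟪x, x⟫ = ⟪p₀, p₀⟫ + ε ^ 2 * ⟪xv, xv⟫ := by
        rw [hx, inner_add_left, inner_add_right, inner_add_right,
          real_inner_smul_left, real_inner_smul_right, real_inner_smul_left,
          real_inner_smul_right, hp₀xv]
        have : ⟪xv, p₀⟫ = 0 := by rw [real_inner_comm]; exact hp₀xv
        rw [this]
        ring
      have hE : 0 < ε ^ 2 * ⟪xv, xv⟫ := by
        have := rips hxv0
        positivity
      rw [hq, inner_sub_left, real_inner_smul_left]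
      have hxp₀ : ⟪x, p₀⟫ = ⟪p₀, p₀⟫ := by rw [real_inner_comm]; exact hp₀x
      rw [hxp₀, hp₀x, hxxval]
      set N := ⟪p₀, p₀⟫
      set E := ε ^ 2 * ⟪xv, xv⟫
      have heq : N - N / (N + E) * N = N * E / (N + E) := by
        field_simp
        ring
      rw [heq]
      positivity
    -- per-constraint data for s₀
    have hcovdata : ∀ u : {u : V // u ∈ s₀}, ∃ (i : Fin (m + 1)) (a₀ : ℝ), 0 < a₀ ∧
        ∀ a : ℝ, 0 < a → a ≤ a₀ → ∀ z ∈ BA u.1, 0 < ⟪((lb i : W) : V), z⟫ + a * ⟪q, z⟫ := by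
      rintro ⟨u, hu⟩
      obtain ⟨i, hi⟩ := hlbcov _ (hsbarmem u hu)
      have hπmem : ∀ z ∈ BA u, (∀ ub ∈ sbar, ⟪ub, π z⟫ ≤ 0) ∧ ⟪(⟨u, hmemW u hu⟩ : W), π z⟫ = 0 := by
        intro z hz
        constructor
        · intro ub hub
          rw [hsbar, Finset.mem_image] at hub
          obtain ⟨⟨u', hu'⟩, _, rfl⟩ := hub
          have h5 : ⟪(⟨u', hmemW u' hu'⟩ : W), π z⟫ = ⟪u', z⟫ := hπu u' (hmemW u' hu') z
          rw [h5]
          exact hz.1.1 u' (Finset.mem_filter.mp hu').1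
        · have h5 : ⟪(⟨u, hmemW u hu⟩ : W), π z⟫ = ⟪u, z⟫ := hπu u (hmemW u hu) z
          rw [h5]
          exact hz.2
      have hφval : ∀ z : V, ⟪((lb i : W) : V), z⟫ = ⟪(lb i : W), π z⟫ := by
        intro z
        exact (hπu _ (lb i).2 z).symm
      have h0 : ∀ z ∈ BA u, 0 ≤ ⟪((lb i : W) : V), z⟫ := by
        intro z hz
        rw [hφval]
        by_cases hπz : π z = 0
        · rw [hπz, inner_zero_right]
        · exact le_of_lt (hi (π z) (hπmem z hz).1 (hπmem z hz).2 hπz)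
      have h1 : ∀ z ∈ BA u, ⟪((lb i : W) : V), z⟫ = 0 → 0 < ⟪q, z⟫ := by
        intro z hz hzero
        have hπz : π z = 0 := by
          by_contra hne
          have := hi (π z) (hπmem z hz).1 (hπmem z hz).2 hne
          rw [← hφval] at this
          linarith
        obtain ⟨τ, hτ⟩ := hπ0 z (by rw [hπz]; simp)
        have hcz : ⟪c, z⟫ = 1 := hz.1.2
        rw [hτ, real_inner_smul_right, hp₀c, mul_one] at hcz
        rw [hτ, hcz, one_smul]
        exact hqp₀
      obtain ⟨a₀, ha₀, hmix⟩ := posmix (hBAcomp u) (inner_cont _) (inner_cont q) h0 h1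
      exact ⟨i, a₀, ha₀, hmix⟩
    choose iu au hau0 hau using hcovdata
    set A : Fin (m + 1) → ℝ := fun i =>
      (insert (1:ℝ) ((s₀.attach.filter (fun u => iu u = i)).image au)).min'
        (Finset.insert_nonempty _ _) with hA
    have hA0 : ∀ i, 0 < A i := by
      intro i
      rw [hA, Finset.lt_min'_iff]
      intro b hb
      rcases Finset.mem_insert.mp hb with rfl | hb
      · exact one_pos
      · obtain ⟨u, _, rfl⟩ := Finset.mem_image.mp hb
        exact hau0 u
    have hAle : ∀ (u : {u : V // u ∈ s₀}), A (iu u) ≤ au u := by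
      intro u
      apply Finset.min'_le
      apply Finset.mem_insert_of_mem
      exact Finset.mem_image_of_mem _ (Finset.mem_filter.mpr ⟨Finset.mem_attach _ _, rfl⟩)
    -- assemble the functionals
    set ℓ : Fin (m + 2) → V := Fin.cons ℓ₀ (fun i => ((lb i : W) : V) + A i • q) with hℓ
    have hℓx : ∀ i, ⟪ℓ i, x⟫ = 0 := by
      intro i
      refine Fin.cases ?_ ?_ i
      · rw [hℓ, Fin.cons_zero]; exact hℓ₀x
      · intro j
        rw [hℓ, Fin.cons_succ, inner_add_left, real_inner_smul_left, hqx, mul_zero,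
          add_zero, hx, inner_add_right, real_inner_smul_right]
        have h1 : ⟪((lb j : W) : V), p₀⟫ = 0 :=
          Submodule.inner_right_of_mem_orthogonal (lb j).2 hp₀Wo
        have h2 : ⟪((lb j : W) : V), xv⟫ = 0 := hlbx j
        rw [h1, h2, mul_zero, add_zero]
    refine ⟨x, hx0, hxs, ℓ, hℓx, ?_⟩
    intro u hu
    by_cases h : ⟪u, p₀⟫ = 0
    · have hu₀ : u ∈ s₀ := Finset.mem_filter.mpr ⟨hu, h⟩
      set ub : {u : V // u ∈ s₀} := ⟨u, hu₀⟩ with hub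
      refine ⟨(iu ub).succ, ?_⟩
      intro z hzC hz0 hzne
      have hcz : 0 < ⟪c, z⟫ := hc z hzC hzne
      have hmem : (⟪c, z⟫)⁻¹ • z ∈ BA u := by
        constructor
        · constructor
          · exact hCsmul _ _ (by positivity) hzC
          · rw [real_inner_smul_right]; exact inv_mul_cancel₀ (ne_of_gt hcz)
        · rw [real_inner_smul_right, hz0, mul_zero]
      have hval := hau ub (A (iu ub)) (hA0 _) (hAle ub) _ hmem
      rw [real_inner_smul_right, real_inner_smul_right] at hval
      rw [hℓ, Fin.cons_succ, inner_add_left, real_inner_smul_left]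
      have hval2 := mul_pos hcz hval
      have heq : ⟪c, z⟫ * ((⟪c, z⟫)⁻¹ * ⟪((lb (iu ub) : W) : V), z⟫ +
          A (iu ub) * ((⟪c, z⟫)⁻¹ * ⟪q, z⟫)) =
          ⟪((lb (iu ub) : W) : V), z⟫ + A (iu ub) * ⟪q, z⟫ := by
        field_simp
      rw [heq] at hval2
      exact hval2
    · have husA : u ∈ sA := Finset.mem_filter.mpr ⟨hu, h⟩
      refine ⟨0, ?_⟩
      intro z hzC hz0 hzne
      rw [hℓ, Fin.cons_zero]
      exact hℓ₀cov u husA z hzC hz0 hzne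

section SphereAux

open Module

lemma mem_uSphere_iff {d : ℕ} {y : Euc (d + 1)} : y ∈ uSphere d ↔ ‖y‖ = 1 := by
  rw [uSphere, mem_sphere_zero_iff_norm]

lemma nproj_unit {n : ℕ} {y : Euc n} (h : ‖y‖ = 1) : nproj y = y := by
  rw [nproj, h, inv_one, one_smul]

lemma norm_nproj {n : ℕ} {y : Euc n} (h : y ≠ 0) : ‖nproj y‖ = 1 := by
  rw [nproj, norm_smul, norm_inv, norm_norm]
  exact inv_mul_cancel₀ (norm_ne_zero_iff.mpr h)

lemma inner_nproj {n : ℕ} (u y : Euc n) : ⟪u, nproj y⟫ = ‖y‖⁻¹ * ⟪u, y⟫ := by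
  rw [nproj, real_inner_smul_right]

lemma nproj_smul {n : ℕ} {c : ℝ} (hc : 0 < c) (y : Euc n) : nproj (c • y) = nproj y := by
  rw [nproj, nproj, norm_smul, Real.norm_eq_abs, abs_of_pos hc, mul_inv, smul_smul]
  congr 1
  rw [mul_comm c⁻¹ ‖y‖⁻¹, mul_assoc, inv_mul_cancel₀ (ne_of_gt hc), mul_one]

lemma continuousAt_nproj {n : ℕ} {w : Euc n} (h : w ≠ 0) :
    ContinuousAt (fun w : Euc n => nproj w) w := by
  simp only [nproj]
  exact ((continuousAt_id.norm.inv₀ (norm_ne_zero_iff.mpr h)).smul continuousAt_id)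

end SphereAux

/-- For any convex polytope `P ⊆ S^d`, `d > 2`, there are an interior point `x` of `P`
and `d + 1` open hemispheres whose boundary great spheres all contain `x` such that
every proper face of `P` is contained in one of the hemispheres. -/
theorem stmt14 (d : ℕ) (hd : 2 < d) (P : Set (Euc (d + 1))) (hP : IsSphPolytope d P) :
    ∃ x ∈ sphInt d P, ∃ v : Fin (d + 1) → Euc (d + 1),
      (∀ i, v i ∈ uSphere d ∧ ⟪v i, x⟫ = 0) ∧
      ∀ F, IsSphFace d P F → F ≠ P → ∃ i, F ⊆ openHemi d (v i) := by
  classical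
  obtain ⟨⟨hcomp, hconv, hint⟩, s, hsunitS, hPeq⟩ := hP
  obtain ⟨csph, hcsphS, hchemi⟩ := hconv.2.1
  have hPsub : P ⊆ uSphere d := hconv.1
  have hsunit : ∀ u ∈ s, ‖u‖ = 1 := fun u hu => mem_uSphere_iff.mp (hsunitS u hu)
  have hPmem : ∀ y : Euc (d + 1), y ∈ P ↔ (‖y‖ = 1 ∧ ∀ u ∈ s, ⟪u, y⟫ ≤ 0) := by
    intro y
    rw [hPeq]
    constructor
    · rintro ⟨h1, h2⟩; exact ⟨mem_uSphere_iff.mp h1, h2⟩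
    · rintro ⟨h1, h2⟩; exact ⟨mem_uSphere_iff.mpr h1, h2⟩
  -- s is nonempty
  have hsne : s.Nonempty := by
    rcases s.eq_empty_or_nonempty with hse | h
    · exfalso
      have hmem : -csph ∈ P := by
        rw [hPmem]
        constructor
        · rw [norm_neg]; exact mem_uSphere_iff.mp hcsphS
        · intro u hu; rw [hse] at hu; exact absurd hu (Finset.notMem_empty u)
      have := (hchemi hmem).2
      rw [inner_neg_right] at this
      have h2 : ⟪csph, csph⟫ = 1 := by
        rw [real_inner_self_eq_norm_sq, mem_uSphere_iff.mp hcsphS]; norm_num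
      rw [h2] at this
      norm_num at this
    · exact h
  -- interior points satisfy strict inequalities
  have hstrict : ∀ y ∈ sphInt d P, ∀ u ∈ s, ⟪u, y⟫ < 0 := by
    intro y hy u hu
    obtain ⟨hyS, U, hU, hyU, hUP⟩ := hy
    have hyP : y ∈ P := hUP ⟨hyU, hyS⟩
    have hynorm : ‖y‖ = 1 := mem_uSphere_iff.mp hyS
    have huu : ⟪u, u⟫ = 1 := by
      rw [real_inner_self_eq_norm_sq, hsunit u hu]; norm_num
    have hle : ⟪u, y⟫ ≤ 0 := ((hPmem y).mp hyP).2 u hu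
    rcases lt_or_eq_of_le hle with h | h
    · exact h
    exfalso
    have hy0 : y ≠ 0 := by
      intro h0; rw [h0, norm_zero] at hynorm; norm_num at hynorm
    have hcont : ContinuousAt (fun δ : ℝ => nproj (y + δ • u)) 0 := by
      apply ContinuousAt.comp (g := fun w : Euc (d+1) => nproj w)
      · rw [show y + (0:ℝ) • u = y by rw [zero_smul, add_zero]]
        exact continuousAt_nproj hy0
      · exact continuousAt_const.add (continuousAt_id.smul continuousAt_const)
    have hg0 : (fun δ : ℝ => nproj (y + δ • u)) 0 = y := by
      simp only [zero_smul, add_zero]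
      exact nproj_unit hynorm
    have hpre : (fun δ : ℝ => nproj (y + δ • u)) ⁻¹' U ∈ nhds (0 : ℝ) := by
      apply hcont.preimage_mem_nhds
      rw [show y + (0:ℝ) • u = y from by rw [zero_smul, add_zero], nproj_unit hynorm]
      exact hU.mem_nhds hyU
    obtain ⟨δ₀, hδ₀pos, hball⟩ := Metric.mem_nhds_iff.mp hpre
    set δ : ℝ := δ₀ / 2 with hδdef
    have hδpos : 0 < δ := by positivity
    have hδU : nproj (y + δ • u) ∈ U := by
      apply hball
      rw [mem_ball, dist_zero_right, Real.norm_eq_abs, abs_of_pos hδpos]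
      rw [hδdef]; linarith
    have hne : y + δ • u ≠ 0 := by
      intro hz
      have h1 : ⟪u, y + δ • u⟫ = 0 := by rw [hz, inner_zero_right]
      rw [inner_add_right, h, real_inner_smul_right, huu, mul_one] at h1
      have : δ = 0 := by linarith [h1]
      linarith
    have hmemP : nproj (y + δ • u) ∈ P :=
      hUP ⟨hδU, mem_uSphere_iff.mpr (norm_nproj hne)⟩
    have hval := ((hPmem _).mp hmemP).2 u hu
    rw [inner_nproj, inner_add_right, h, real_inner_smul_right, huu, mul_one,
      zero_add] at hval
    have hninv : 0 < ‖y + δ • u‖⁻¹ := by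
      have := norm_pos_iff.mpr hne
      positivity
    nlinarith [mul_pos hninv hδpos]
  -- hypotheses for the core theorem
  obtain ⟨y₀, hy₀⟩ := hint
  have hcoreint : ∃ x₀ : Euc (d + 1), ∀ u ∈ s, ⟪u, x₀⟫ < 0 := ⟨y₀, hstrict y₀ hy₀⟩
  have hcorec : ∃ c : Euc (d + 1), ∀ z : Euc (d + 1),
      (∀ u ∈ s, ⟪u, z⟫ ≤ 0) → z ≠ 0 → 0 < ⟪c, z⟫ := by
    refine ⟨csph, fun z hz hz0 => ?_⟩
    have hzn : (0:ℝ) < ‖z‖ := norm_pos_iff.mpr hz0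
    have hmem : ‖z‖⁻¹ • z ∈ P := by
      rw [hPmem]
      constructor
      · rw [norm_smul, norm_inv, norm_norm]; exact inv_mul_cancel₀ (ne_of_gt hzn)
      · intro u hu
        rw [real_inner_smul_right]
        exact mul_nonpos_of_nonneg_of_nonpos (by positivity) (hz u hu)
    have hp := (hchemi hmem).2
    rw [real_inner_smul_right] at hp
    have h4 := mul_pos hzn hp
    have h5 : ‖z‖ * (‖z‖⁻¹ * ⟪csph, z⟫) = ⟪csph, z⟫ := by field_simp
    rw [h5] at h4
    exact h4
  have hrank : finrank ℝ (Euc (d + 1)) = d + 1 := finrank_euclideanSpace_fin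
  obtain ⟨x', hx'0, hx's, ℓ, hℓx', hcov⟩ :=
    coreCone d (Euc (d + 1)) hrank s hsunit hcoreint hcorec
  -- normalize x'
  have hx'n : (0:ℝ) < ‖x'‖ := norm_pos_iff.mpr hx'0
  set x : Euc (d + 1) := ‖x'‖⁻¹ • x' with hxdef
  have hxnorm : ‖x‖ = 1 := by
    rw [hxdef, norm_smul, norm_inv, norm_norm]
    exact inv_mul_cancel₀ (ne_of_gt hx'n)
  have hxS : x ∈ uSphere d := mem_uSphere_iff.mpr hxnorm
  have hxstrict : ∀ u ∈ s, ⟪u, x⟫ < 0 := by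
    intro u hu
    rw [hxdef, real_inner_smul_right]
    exact mul_neg_of_pos_of_neg (by positivity) (hx's u hu)
  have hxint : x ∈ sphInt d P := by
    refine ⟨hxS, ⋂ u ∈ s, {z : Euc (d + 1) | ⟪u, z⟫ < 0}, ?_, ?_, ?_⟩
    · exact isOpen_biInter_finset fun u _ => isOpen_lt (inner_cont u) continuous_const
    · simp only [Set.mem_iInter]
      intro u hu
      exact hxstrict u hu
    · rintro z ⟨hzU, hzS⟩
      rw [hPmem]
      refine ⟨mem_uSphere_iff.mp hzS, ?_⟩
      intro u hu
      simp only [Set.mem_iInter] at hzU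
      exact le_of_lt (hzU u hu)
  have hx0 : x ≠ 0 := by
    intro h0; rw [h0, norm_zero] at hxnorm; norm_num at hxnorm
  have hℓx : ∀ i, ⟪ℓ i, x⟫ = 0 := by
    intro i
    rw [hxdef, real_inner_smul_right, hℓx' i, mul_zero]
  -- a unit vector orthogonal to x (for the degenerate directions)
  have hwex : ∃ w : Euc (d + 1), ‖w‖ = 1 ∧ ⟪w, x⟫ = 0 := by
    have hne : ((ℝ ∙ x)ᗮ : Submodule ℝ (Euc (d + 1))) ≠ ⊥ := by
      intro hb
      have h1 := Submodule.finrank_add_finrank_orthogonal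
        (K := (ℝ ∙ x : Submodule ℝ (Euc (d + 1))))
      have h2 : finrank ℝ ((ℝ ∙ x)ᗮ : Submodule ℝ (Euc (d + 1))) = 0 := by
        rw [hb]; exact finrank_bot ℝ _
      rw [finrank_span_singleton hx0, h2, hrank] at h1
      omega
    obtain ⟨w', hw'mem, hw'0⟩ := Submodule.exists_mem_ne_zero_of_ne_bot hne
    have hw'x : ⟪w', x⟫ = 0 := by
      have h3 := Submodule.inner_right_of_mem_orthogonal (K := (ℝ ∙ x : Submodule ℝ (Euc (d + 1))))
        (Submodule.mem_span_singleton_self x) hw'mem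
      rw [real_inner_comm] at h3
      exact h3
    have hw'n : (0:ℝ) < ‖w'‖ := norm_pos_iff.mpr hw'0
    refine ⟨‖w'‖⁻¹ • w', ?_, ?_⟩
    · rw [norm_smul, norm_inv, norm_norm]; exact inv_mul_cancel₀ (ne_of_gt hw'n)
    · rw [real_inner_smul_left, hw'x, mul_zero]
  obtain ⟨w₁, hw₁n, hw₁x⟩ := hwex
  -- the hemisphere poles
  set v : Fin (d + 1) → Euc (d + 1) :=
    fun i => if h : ℓ i = 0 then w₁ else ‖ℓ i‖⁻¹ • ℓ i with hvdef
  have hv : ∀ i, v i ∈ uSphere d ∧ ⟪v i, x⟫ = 0 := by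
    intro i
    simp only [hvdef]
    by_cases h : ℓ i = 0
    · rw [dif_pos h]
      exact ⟨mem_uSphere_iff.mpr hw₁n, hw₁x⟩
    · rw [dif_neg h]
      have hn : (0:ℝ) < ‖ℓ i‖ := norm_pos_iff.mpr h
      constructor
      · rw [mem_uSphere_iff, norm_smul, norm_inv, norm_norm]
        exact inv_mul_cancel₀ (ne_of_gt hn)
      · rw [real_inner_smul_left, hℓx i, mul_zero]
  refine ⟨x, hxint, v, hv, ?_⟩
  -- covering the proper faces
  intro F hF hFne
  obtain ⟨hFP, hFconv, hFface⟩ := hF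
  rcases F.eq_empty_or_nonempty with hFe | hFne'
  · exact ⟨0, by rw [hFe]; exact Set.empty_subset _⟩
  obtain ⟨_, ⟨xF, hxFS, hFhemi⟩, hFseg⟩ := hFconv
  -- every nonempty proper face lies on a facet great sphere
  have hfacet : ∃ u ∈ s, ∀ y ∈ F, ⟪u, y⟫ = 0 := by
    by_contra hcon
    push_neg at hcon
    have hcon' : ∀ u ∈ s, ∃ y ∈ F, ⟪u, y⟫ < 0 := by
      intro u hu
      obtain ⟨y, hyF, hyne⟩ := hcon u hu
      exact ⟨y, hyF, lt_of_le_of_ne (((hPmem y).mp (hFP hyF)).2 u hu) hyne⟩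
    -- find a point of F strictly inside all constraints
    have hmid : ∀ t : Finset (Euc (d + 1)), t ⊆ s → ∃ z ∈ F, ∀ u ∈ t, ⟪u, z⟫ < 0 := by
      intro t
      induction t using Finset.induction_on with
      | empty =>
        intro _
        obtain ⟨y₁, hy₁⟩ := hFne'
        exact ⟨y₁, hy₁, by simp⟩
      | @insert a t ha IH =>
        intro hins
        obtain ⟨z, hzF, hz⟩ := IH (fun u hu => hins (Finset.mem_insert_of_mem hu))
        obtain ⟨ya, hyaF, hya⟩ := hcon' a (hins (Finset.mem_insert_self a t))
        set w : Euc (d + 1) := (1 - 2⁻¹ : ℝ) • z + (2⁻¹ : ℝ) • ya with hwdef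
        have hw0 : w ≠ 0 := by
          intro h0
          have h1 : ⟪xF, w⟫ = 0 := by rw [h0, inner_zero_right]
          rw [hwdef, inner_add_right, real_inner_smul_right, real_inner_smul_right] at h1
          have h2 := (hFhemi hzF).2
          have h3 := (hFhemi hyaF).2
          nlinarith
        have hz' : nproj w ∈ F := by
          apply hFseg z hzF ya hyaF
          exact ⟨2⁻¹, ⟨by norm_num, by norm_num⟩, rfl⟩
        refine ⟨nproj w, hz', ?_⟩
        intro u hu
        have hinv : (0:ℝ) < ‖w‖⁻¹ := by
          have := norm_pos_iff.mpr hw0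
          positivity
        rw [inner_nproj, hwdef, inner_add_right, real_inner_smul_right,
          real_inner_smul_right]
        rcases Finset.mem_insert.mp hu with rfl | hut
        · have h1 : ⟪u, z⟫ ≤ 0 := ((hPmem z).mp (hFP hzF)).2 u (hins hu)
          apply mul_neg_of_pos_of_neg hinv
          nlinarith
        · have h1 : ⟪u, ya⟫ ≤ 0 := ((hPmem ya).mp (hFP hyaF)).2 u (hins (Finset.mem_insert_of_mem hut))
          have h2 := hz u hut
          apply mul_neg_of_pos_of_neg hinv
          nlinarith
    obtain ⟨z, hzF, hzstrict⟩ := hmid s Finset.Subset.rfl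
    -- then F = P, contradiction
    apply hFne
    apply Set.Subset.antisymm hFP
    intro y' hy'P
    have hznorm : ‖z‖ = 1 := ((hPmem z).mp (hFP hzF)).1
    have hy'norm : ‖y'‖ = 1 := ((hPmem y').mp hy'P).1
    set ε : ℝ := (s.image fun u => -⟪u, z⟫).min' (hsne.image _) with hεdef
    have hε0 : 0 < ε := by
      rw [hεdef, Finset.lt_min'_iff]
      intro b hb
      obtain ⟨u, hu, rfl⟩ := Finset.mem_image.mp hb
      have := hzstrict u hu
      linarith
    have hεle : ∀ u ∈ s, ε ≤ -⟪u, z⟫ := fun u hu =>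
      Finset.min'_le _ _ (Finset.mem_image_of_mem _ hu)
    set wv : Euc (d + 1) := (1 + ε) • z - ε • y' with hwv
    have hwvnorm : 1 ≤ ‖wv‖ := by
      have h1 : ‖(1 + ε) • z‖ - ‖ε • y'‖ ≤ ‖wv‖ := norm_sub_norm_le _ _
      rw [norm_smul, norm_smul, hznorm, hy'norm, Real.norm_eq_abs, Real.norm_eq_abs,
        abs_of_pos (by linarith : (0:ℝ) < 1 + ε), abs_of_pos hε0] at h1
      linarith
    have hwv0 : wv ≠ 0 := by
      intro h0; rw [h0, norm_zero] at hwvnorm; linarith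
    have hwvpos : (0:ℝ) < ‖wv‖ := by linarith
    have hrP : nproj wv ∈ P := by
      rw [hPmem]
      refine ⟨norm_nproj hwv0, ?_⟩
      intro u hu
      rw [inner_nproj, hwv, inner_sub_right, real_inner_smul_right, real_inner_smul_right]
      have h1 : ⟪u, z⟫ ≤ 0 := ((hPmem z).mp (hFP hzF)).2 u hu
      have h2 : |⟪u, y'⟫| ≤ 1 := by
        have h3 := abs_real_inner_le_norm u y'
        rw [hy'norm, hsunit u hu] at h3
        linarith
      have h3 := hεle u hu
      apply mul_nonpos_of_nonneg_of_nonpos (by positivity)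
      have hεA : ε * ⟪u, z⟫ ≤ 0 :=
        mul_nonpos_of_nonneg_of_nonpos (le_of_lt hε0) h1
      have hεB : -ε ≤ ε * ⟪u, y'⟫ := by nlinarith [abs_le.mp h2]
      have hexp : (1 + ε) * ⟪u, z⟫ = ⟪u, z⟫ + ε * ⟪u, z⟫ := by ring
      linarith
    have hmemseg : z ∈ sphOpenSeg y' (nproj wv) := by
      refine ⟨‖wv‖ / (‖wv‖ + ε), ⟨by positivity, ?_⟩, ?_⟩
      · rw [div_lt_one (by positivity)]; linarith
      · show nproj ((1 - ‖wv‖ / (‖wv‖ + ε)) • y' + (‖wv‖ / (‖wv‖ + ε)) • nproj wv) = z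
        have hvec : (1 - ‖wv‖ / (‖wv‖ + ε)) • y' + (‖wv‖ / (‖wv‖ + ε)) • nproj wv
            = ((1 + ε) / (‖wv‖ + ε)) • z := by
          simp only [nproj, hwv]
          have hd1 : ‖wv‖ ≠ 0 := ne_of_gt hwvpos
          have hd2 : ‖wv‖ + ε ≠ 0 := by positivity
          rw [hwv] at hd1 hd2
          match_scalars
          · field_simp; ring
          · field_simp
        rw [hvec, nproj_smul (by positivity), nproj_unit hznorm]
    have hseg := hFface y' hy'P (nproj wv) hrP ⟨z, hmemseg, hzF⟩
    apply hseg
    refine ⟨0, ⟨le_refl 0, zero_le_one⟩, ?_⟩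
    show nproj ((1 - (0:ℝ)) • y' + (0:ℝ) • nproj wv) = y'
    rw [sub_zero, one_smul, zero_smul, add_zero]
    exact nproj_unit hy'norm
  obtain ⟨u, hus, hufacet⟩ := hfacet
  obtain ⟨i, hi⟩ := hcov u hus
  refine ⟨i, ?_⟩
  intro y hyF
  have hyP := hFP hyF
  obtain ⟨hynorm, hyineq⟩ := (hPmem y).mp hyP
  have hy0 : y ≠ 0 := by
    intro h0; rw [h0, norm_zero] at hynorm; norm_num at hynorm
  have hpos := hi y hyineq (hufacet y hyF) hy0
  have hℓi0 : ℓ i ≠ 0 := by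
    intro h0; rw [h0, inner_zero_left] at hpos; exact lt_irrefl _ hpos
  have hvi : v i = ‖ℓ i‖⁻¹ • ℓ i := by simp only [hvdef]; exact dif_neg hℓi0
  refine ⟨mem_uSphere_iff.mpr hynorm, ?_⟩
  rw [hvi, real_inner_smul_left]
  have hn : (0:ℝ) < ‖ℓ i‖ := norm_pos_iff.mpr hℓi0
  positivity
end

section
/- Let K be a convex body in S^d ⊆ ℝ^{d+1} and let F be a proper exposed face of K. Then the conjugate face F̂ = {x ∈ K* : ⟨x,y⟩ = 0 for all y ∈ F} is a proper exposed face of K*; moreover F̂ = ⋂_{y ∈ F} ({x ∈ S^d : ⟨x,y⟩ = 0} ∩ K*), where for every y ∈ F the closed hemisphere {x ∈ S^d : ⟨x,y⟩ ≤ 0} contains K* (so its boundary great sphere supports K*); and the conjugate of F̂ (taken with respect to K*) equals F, so that F ↦ F̂ is a bijection between the exposed faces of K and those of K*. -/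
open RealInnerProductSpace Metric Set

section Stmt15Aux

variable {d : ℕ}

private lemma mem_uSphere' {x : Euc (d + 1)} : x ∈ uSphere d ↔ ‖x‖ = 1 := by
  simp [uSphere]

private lemma nproj_mem_uSphere {x : Euc (d + 1)} (hx : x ≠ 0) : nproj x ∈ uSphere d := by
  rw [mem_uSphere', nproj, norm_smul, norm_inv, norm_norm]
  exact inv_mul_cancel₀ (norm_ne_zero_iff.mpr hx)

private lemma nproj_eq_self {n : ℕ} {x : Euc n} (hx : ‖x‖ = 1) : nproj x = x := by
  rw [nproj, hx]; simp

private lemma smul_nproj {n : ℕ} {x : Euc n} (hx : x ≠ 0) : ‖x‖ • nproj x = x := by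
  rw [nproj, smul_smul, mul_inv_cancel₀ (norm_ne_zero_iff.mpr hx), one_smul]

private lemma nproj_smul_pos {n : ℕ} {r : ℝ} (hr : 0 < r) (x : Euc n) :
    nproj (r • x) = nproj x := by
  simp only [nproj, norm_smul, Real.norm_eq_abs, abs_of_pos hr, smul_smul, mul_inv]
  congr 1
  rcases eq_or_ne x 0 with rfl | hx
  · simp
  · rw [mul_right_comm, inv_mul_cancel₀ hr.ne', one_mul]

/-- The cone over a subset of the sphere. -/
private def coneOf (d : ℕ) (K : Set (Euc (d + 1))) : Set (Euc (d + 1)) :=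
  {x | ∃ t : ℝ, 0 ≤ t ∧ ∃ y ∈ K, x = t • y}

private lemma subset_coneOf {K : Set (Euc (d + 1))} : K ⊆ coneOf d K :=
  fun y hy => ⟨1, zero_le_one, y, hy, (one_smul ℝ y).symm⟩

private lemma coneOf_inter_sphere {K : Set (Euc (d + 1))} (hs : K ⊆ uSphere d)
    {x : Euc (d + 1)} (hx : x ∈ coneOf d K) (hxs : x ∈ uSphere d) : x ∈ K := by
  obtain ⟨t, ht, y, hy, rfl⟩ := hx
  have hy1 : ‖y‖ = 1 := mem_uSphere'.mp (hs hy)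
  have h1 : ‖t • y‖ = 1 := mem_uSphere'.mp hxs
  rw [norm_smul, hy1, mul_one, Real.norm_eq_abs, abs_of_nonneg ht] at h1
  rw [h1, one_smul]; exact hy

private lemma coneOf_add {K : Set (Euc (d + 1))} (hconv : SphConvex d K)
    {p q : Euc (d + 1)} (hp : p ∈ coneOf d K) (hq : q ∈ coneOf d K) :
    p + q ∈ coneOf d K := by
  obtain ⟨a, ha, y, hy, rfl⟩ := hp
  obtain ⟨b, hb, z, hz, rfl⟩ := hq
  rcases eq_or_lt_of_le ha with rfl | ha
  · rw [zero_smul, zero_add]; exact ⟨b, hb, z, hz, rfl⟩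
  rcases eq_or_lt_of_le hb with rfl | hb
  · rw [zero_smul, add_zero]; exact ⟨a, ha.le, y, hy, rfl⟩
  obtain ⟨c, hcs, hc⟩ := hconv.2.1
  have hcy : 0 < ⟪c, y⟫ := (hc hy).2
  have hcz : 0 < ⟪c, z⟫ := (hc hz).2
  set w := a • y + b • z with hw
  have hcw : 0 < ⟪c, w⟫ := by
    rw [hw, inner_add_right, real_inner_smul_right, real_inner_smul_right]
    nlinarith
  have hwne : w ≠ 0 := by intro h; rw [h, inner_zero_right] at hcw; exact lt_irrefl 0 hcw
  have hab : 0 < a + b := by linarith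
  have hmem : nproj w ∈ sphSeg y z := by
    refine ⟨b / (a + b), ⟨by positivity, by rw [div_le_one hab]; linarith⟩, ?_⟩
    have e1 : 1 - b / (a + b) = (a + b)⁻¹ * a := by field_simp; ring
    have e2 : b / (a + b) = (a + b)⁻¹ * b := div_eq_inv_mul b (a + b)
    have h1 : (1 - b / (a + b)) • y + (b / (a + b)) • z = (a + b)⁻¹ • w := by
      rw [hw, smul_add, smul_smul, smul_smul, e1, e2]
    show nproj ((1 - b / (a + b)) • y + (b / (a + b)) • z) = nproj w
    rw [h1, nproj_smul_pos (by positivity) w]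
  have hK : nproj w ∈ K := hconv.2.2 y hy z hz hmem
  exact ⟨‖w‖, norm_nonneg w, nproj w, hK, (smul_nproj hwne).symm⟩

private lemma coneOf_isClosed {K : Set (Euc (d + 1))} (hcomp : IsCompact K)
    (hs : K ⊆ uSphere d) (hne : K.Nonempty) : IsClosed (coneOf d K) := by
  rw [← isSeqClosed_iff_isClosed]
  intro u x hu hux
  choose t ht y hy hu_eq using hu
  have hnorm : ∀ n, ‖u n‖ = t n := by
    intro n
    rw [hu_eq n, norm_smul, Real.norm_eq_abs, abs_of_nonneg (ht n),
      mem_uSphere'.mp (hs (hy n)), mul_one]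
  have htt : Filter.Tendsto t Filter.atTop (nhds ‖x‖) := by
    simpa only [hnorm] using hux.norm
  rcases eq_or_ne x 0 with rfl | hx0
  · obtain ⟨y₀, hy₀⟩ := hne
    exact ⟨0, le_refl 0, y₀, hy₀, (zero_smul ℝ y₀).symm⟩
  · obtain ⟨y₀, hy₀, φ, hφ, hyφ⟩ := hcomp.tendsto_subseq hy
    have h1 : Filter.Tendsto (fun n => u (φ n)) Filter.atTop (nhds x) :=
      hux.comp hφ.tendsto_atTop
    have h2 : Filter.Tendsto (fun n => t (φ n) • y (φ n)) Filter.atTop (nhds (‖x‖ • y₀)) :=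
      (htt.comp hφ.tendsto_atTop).smul hyφ
    have h3 : (fun n => u (φ n)) = fun n => t (φ n) • y (φ n) :=
      funext fun n => hu_eq (φ n)
    rw [h3] at h1
    exact ⟨‖x‖, norm_nonneg x, y₀, hy₀, tendsto_nhds_unique h1 h2⟩

private lemma sphPolar_sphPolar {K : Set (Euc (d + 1))} (hK : IsSphBody d K) :
    sphPolar d (sphPolar d K) = K := by
  obtain ⟨hcomp, hconv, hint⟩ := hK
  have hs : K ⊆ uSphere d := hconv.1
  have hne : K.Nonempty := by
    obtain ⟨y₀, hy₀s, U, hU, hyU, hUs⟩ := hint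
    exact ⟨y₀, hUs ⟨hyU, hy₀s⟩⟩
  ext z
  constructor
  · rintro ⟨hzs, hz⟩
    by_contra hzK
    have hzc : z ∉ coneOf d K := fun h => hzK (coneOf_inter_sphere hs h hzs)
    set C : ConvexCone ℝ (Euc (d + 1)) :=
      { carrier := coneOf d K
        smul_mem' := by
          rintro c hc x ⟨t, ht, y, hy, rfl⟩
          exact ⟨c * t, mul_nonneg hc.le ht, y, hy, smul_smul c t y⟩
        add_mem' := fun x hx y hy => coneOf_add hconv hx hy } with hC
    obtain ⟨v, hv1, hv2⟩ :=
      ProperCone.hyperplane_separation' (E := Euc (d + 1)) (x₀ := z)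
        ({ carrier := coneOf d K
           add_mem' := fun hx hy => coneOf_add hconv hx hy
           zero_mem' := ⟨0, le_refl 0, _, hne.choose_spec, (zero_smul ℝ _).symm⟩
           smul_mem' := by
             rintro c x ⟨t, ht, y, hy, rfl⟩
             exact ⟨c * t, mul_nonneg c.2 ht, y, hy, smul_smul (c : ℝ) t y⟩
           isClosed' := coneOf_isClosed hcomp hs hne } : ProperCone ℝ (Euc (d + 1))) hzc
    have hvne : v ≠ 0 := by rintro rfl; simp at hv2
    have hnvne : -v ≠ 0 := neg_ne_zero.mpr hvne
    have hw : nproj (-v) ∈ sphPolar d K := by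
      refine ⟨nproj_mem_uSphere hnvne, ?_⟩
      intro y hy
      have h1 : (0 : ℝ) ≤ ⟪y, v⟫ := hv1 y (subset_coneOf hy)
      have h2 : ⟪nproj (-v), y⟫ = ‖-v‖⁻¹ * -⟪y, v⟫ := by
        rw [nproj, real_inner_smul_left, inner_neg_left, real_inner_comm]
      rw [h2]
      have h3 : (0 : ℝ) ≤ ‖-v‖⁻¹ := inv_nonneg.mpr (norm_nonneg _)
      nlinarith
    have hle := hz _ hw
    have hpos : 0 < ⟪z, nproj (-v)⟫ := by
      rw [nproj, real_inner_smul_right, inner_neg_right]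
      have h4 : ⟪z, v⟫ < 0 := hv2
      have h5 : (0 : ℝ) < ‖-v‖⁻¹ := inv_pos.mpr (norm_pos_iff.mpr hnvne)
      nlinarith
    linarith
  · intro hzK
    refine ⟨hs hzK, ?_⟩
    intro x hx
    have := hx.2 z hzK
    rwa [real_inner_comm]

private lemma exists_expose {F : Set (Euc (d + 1))} (hne : F.Nonempty)
    (hsub : F ⊆ uSphere d) {c : Euc (d + 1)} (hc : ∀ y ∈ F, 0 < ⟪c, y⟫) :
    ∃ v ∈ uSphere d, ∀ x : Euc (d + 1), (∀ y ∈ F, ⟪x, y⟫ ≤ 0) →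
      ⟪x, v⟫ ≤ 0 ∧ (⟪x, v⟫ = 0 ↔ ∀ y ∈ F, ⟪x, y⟫ = 0) := by
  obtain ⟨b, hbF, hsp, hli⟩ := exists_linearIndependent ℝ F
  have hbfin : b.Finite := hli.setFinite
  set t := hbfin.toFinset with hts
  have htF : ∀ y ∈ t, y ∈ F := fun y hy => hbF (hbfin.mem_toFinset.mp hy)
  have htne : t.Nonempty := by
    rcases Finset.eq_empty_or_nonempty t with h | h
    · exfalso
      obtain ⟨y₀, hy₀⟩ := hne
      have hb : b = ∅ := by
        rw [← Set.Finite.coe_toFinset hbfin, ← hts, h]; simp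
      have hmem : y₀ ∈ Submodule.span ℝ F := Submodule.subset_span hy₀
      rw [← hsp, hb, Submodule.span_empty, Submodule.mem_bot] at hmem
      have h1 := mem_uSphere'.mp (hsub hy₀)
      rw [hmem] at h1
      simp at h1
    · exact h
  set v₀ : Euc (d + 1) := ∑ y ∈ t, y with hv₀
  have hcv : 0 < ⟪c, v₀⟫ := by
    rw [hv₀, inner_sum]
    exact Finset.sum_pos (fun y hy => hc y (htF y hy)) htne
  have hv0 : v₀ ≠ 0 := by
    intro h; rw [h, inner_zero_right] at hcv; exact lt_irrefl 0 hcv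
  refine ⟨nproj v₀, nproj_mem_uSphere hv0, ?_⟩
  intro x hx
  have hkey : ⟪x, nproj v₀⟫ = ‖v₀‖⁻¹ * ∑ y ∈ t, ⟪x, y⟫ := by
    rw [nproj, real_inner_smul_right, hv₀, inner_sum]
  have hsumle : ∑ y ∈ t, ⟪x, y⟫ ≤ 0 :=
    Finset.sum_nonpos fun y hy => hx y (htF y hy)
  have hinv : (0 : ℝ) < ‖v₀‖⁻¹ := inv_pos.mpr (norm_pos_iff.mpr hv0)
  refine ⟨by rw [hkey]; nlinarith, ?_, ?_⟩
  · intro h0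
    have hsum0 : ∑ y ∈ t, ⟪x, y⟫ = 0 := by
      rw [hkey] at h0
      rcases mul_eq_zero.mp h0 with h | h
      · exact absurd h (ne_of_gt hinv)
      · exact h
    have hall : ∀ y ∈ t, ⟪x, y⟫ = 0 :=
      (Finset.sum_eq_zero_iff_of_nonpos (fun y hy => hx y (htF y hy))).mp hsum0
    intro y hyF
    have hyspan : y ∈ Submodule.span ℝ b := by
      rw [hsp]; exact Submodule.subset_span hyF
    have hker : Submodule.span ℝ b ≤ LinearMap.ker ((innerSL ℝ x).toLinearMap) := by
      rw [Submodule.span_le]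
      intro w hw
      simp only [SetLike.mem_coe, LinearMap.mem_ker, ContinuousLinearMap.coe_coe,
        innerSL_apply_apply]
      exact hall w (hbfin.mem_toFinset.mpr hw)
    have hy0 := hker hyspan
    simpa only [LinearMap.mem_ker, ContinuousLinearMap.coe_coe, innerSL_apply_apply] using hy0
  · intro hally
    rw [hkey, Finset.sum_eq_zero (fun y hy => hally y (htF y hy)), mul_zero]

private lemma polar_inner_lt {K : Set (Euc (d + 1))} {y₀ x : Euc (d + 1)}
    (hy₀ : y₀ ∈ sphInt d K) (hx : x ∈ sphPolar d K) : ⟪x, y₀⟫ < 0 := by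
  obtain ⟨hy₀s, U, hU, hyU, hUK⟩ := hy₀
  have hy₀K : y₀ ∈ K := hUK ⟨hyU, hy₀s⟩
  have hle : ⟪x, y₀⟫ ≤ 0 := hx.2 y₀ hy₀K
  rcases lt_or_eq_of_le hle with h | h
  · exact h
  exfalso
  have hx1 : ‖x‖ = 1 := mem_uSphere'.mp hx.1
  have hy1 : ‖y₀‖ = 1 := mem_uSphere'.mp hy₀s
  have hcont : ContinuousAt (fun ε : ℝ => nproj (y₀ + ε • x)) 0 := by
    have hf : ContinuousAt (fun ε : ℝ => y₀ + ε • x) 0 := by fun_prop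
    have hnp : ContinuousAt (fun z : Euc (d + 1) => nproj z) (y₀ + (0 : ℝ) • x) := by
      simp only [zero_smul, add_zero]
      simp only [nproj]
      exact (continuous_norm.continuousAt.inv₀ (by rw [hy1]; norm_num)).smul continuousAt_id
    exact ContinuousAt.comp (f := fun ε : ℝ => y₀ + ε • x) (x := (0 : ℝ)) hnp hf
  have hfzero : nproj (y₀ + (0 : ℝ) • x) = y₀ := by
    rw [zero_smul, add_zero]; exact nproj_eq_self hy1
  have hU0 : (fun ε : ℝ => nproj (y₀ + ε • x)) ⁻¹' U ∈ nhds (0 : ℝ) := by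
    refine hcont.preimage_mem_nhds ?_
    show U ∈ nhds (nproj (y₀ + (0 : ℝ) • x))
    rw [hfzero]
    exact hU.mem_nhds hyU
  obtain ⟨δ, hδ, hball⟩ := Metric.mem_nhds_iff.mp hU0
  set ε := δ / 2 with hε
  have hεpos : 0 < ε := by positivity
  have hεball : ε ∈ ball (0 : ℝ) δ := by
    rw [mem_ball, dist_zero_right, Real.norm_eq_abs, abs_of_pos hεpos]
    rw [hε]; linarith
  have hmemU : nproj (y₀ + ε • x) ∈ U := hball hεball
  have hinner : ⟪x, y₀ + ε • x⟫ = ε := by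
    rw [inner_add_right, h, zero_add, real_inner_smul_right, real_inner_self_eq_norm_sq, hx1]
    norm_num
  have hwne : y₀ + ε • x ≠ 0 := by
    intro h0; rw [h0, inner_zero_right] at hinner; linarith
  have hmemS : nproj (y₀ + ε • x) ∈ uSphere d := nproj_mem_uSphere hwne
  have hmemK : nproj (y₀ + ε • x) ∈ K := hUK ⟨hmemU, hmemS⟩
  have hfin := hx.2 _ hmemK
  rw [nproj, real_inner_smul_right, hinner] at hfin
  have hp : (0 : ℝ) < ‖y₀ + ε • x‖⁻¹ := inv_pos.mpr (norm_pos_iff.mpr hwne)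
  nlinarith

private lemma conj_exposed {L G : Set (Euc (d + 1))} (hLs : L ⊆ uSphere d)
    {c : Euc (d + 1)} (hc : ∀ y ∈ L, 0 < ⟪c, y⟫)
    (hG : IsSphExposedFace d L G) :
    IsSphExposedFace d (sphPolar d L) (conjFace d L G) := by
  obtain ⟨hGne, u, hu_s, hu_supp, hGeq⟩ := hG
  have hGL : G ⊆ L := by rw [hGeq]; exact fun y hy => hy.1
  have hGs : G ⊆ uSphere d := fun y hy => hLs (hGL hy)
  obtain ⟨v, hvs, hv⟩ := exists_expose hGne hGs (fun y hy => hc y (hGL hy))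
  refine ⟨⟨u, ⟨hu_s, hu_supp⟩, ?_⟩, v, hvs, ?_, ?_⟩
  · intro y hy
    rw [hGeq] at hy
    exact hy.2
  · intro x hx
    have h1 : ∀ y ∈ G, ⟪x, y⟫ ≤ 0 := fun y hy => hx.2 y (hGL hy)
    have h2 := (hv x h1).1
    rwa [real_inner_comm]
  · ext x
    constructor
    · rintro ⟨hx, hx2⟩
      refine ⟨hx, ?_⟩
      have h1 : ∀ y ∈ G, ⟪x, y⟫ ≤ 0 := fun y hy => hx.2 y (hGL hy)
      rw [real_inner_comm]
      exact (hv x h1).2.mpr hx2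
    · rintro ⟨hx, hx2⟩
      refine ⟨hx, ?_⟩
      have h1 : ∀ y ∈ G, ⟪x, y⟫ ≤ 0 := fun y hy => hx.2 y (hGL hy)
      exact (hv x h1).2.mp (by rwa [real_inner_comm] at hx2)

private lemma conj_conj {L G : Set (Euc (d + 1))}
    (hbip : sphPolar d (sphPolar d L) = L)
    (hG : IsSphExposedFace d L G) :
    conjFace d (sphPolar d L) (conjFace d L G) = G := by
  obtain ⟨hGne, u, hu_s, hu_supp, hGeq⟩ := hG
  have hGL : G ⊆ L := by rw [hGeq]; exact fun y hy => hy.1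
  have hu_conj : u ∈ conjFace d L G := by
    refine ⟨⟨hu_s, hu_supp⟩, ?_⟩
    intro y hy; rw [hGeq] at hy; exact hy.2
  ext z
  constructor
  · rintro ⟨hz1, hz2⟩
    rw [hbip] at hz1
    rw [hGeq]
    exact ⟨hz1, by rw [real_inner_comm]; exact hz2 u hu_conj⟩
  · intro hz
    refine ⟨?_, ?_⟩
    · show z ∈ sphPolar d (sphPolar d L)
      rw [hbip]; exact hGL hz
    · intro x hx
      rw [real_inner_comm]
      exact hx.2 z hz

end Stmt15Aux

/-- The conjugate face `F̂` of a proper exposed face `F` of a convex body `K ⊆ S^d` is a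
proper exposed face of `K*`; moreover `F̂ = ⋂_{y ∈ F} ({x : ⟪x, y⟫ = 0} ∩ K*)`, where for
every `y ∈ F` the closed hemisphere `{x : ⟪x, y⟫ ≤ 0}` contains `K*`; the conjugate of
`F̂` with respect to `K*` equals `F`, and `F ↦ F̂` is a bijection between the exposed faces
of `K` and those of `K*`. -/
theorem stmt15 (d : ℕ) (K : Set (Euc (d + 1))) (hK : IsSphBody d K)
    (F : Set (Euc (d + 1))) (hF : IsSphExposedFace d K F) (hFp : F ≠ K) :
    IsSphExposedFace d (sphPolar d K) (conjFace d K F) ∧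
    conjFace d K F ≠ sphPolar d K ∧
    conjFace d K F = ⋂ y ∈ F, ({x ∈ uSphere d | ⟪x, y⟫ = 0} ∩ sphPolar d K) ∧
    (∀ y ∈ F, ∀ x ∈ sphPolar d K, ⟪x, y⟫ ≤ 0) ∧
    conjFace d (sphPolar d K) (conjFace d K F) = F ∧
    Set.BijOn (conjFace d K) {G | IsSphExposedFace d K G}
      {G | IsSphExposedFace d (sphPolar d K) G} := by
  obtain ⟨hcomp, hconv, hint⟩ := hK
  have hKs : K ⊆ uSphere d := hconv.1
  obtain ⟨c, hcs, hchemi⟩ := hconv.2.1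
  have hc : ∀ y ∈ K, 0 < ⟪c, y⟫ := fun y hy => (hchemi hy).2
  have hbip : sphPolar d (sphPolar d K) = K := sphPolar_sphPolar ⟨hcomp, hconv, hint⟩
  obtain ⟨y₀, hy₀⟩ := hint
  have hpolc : ∀ x ∈ sphPolar d K, 0 < ⟪-y₀, x⟫ := by
    intro x hx
    rw [inner_neg_left]
    have h1 := polar_inner_lt hy₀ hx
    rw [real_inner_comm] at h1
    linarith
  have hFK : F ⊆ K := by
    obtain ⟨_, u, _, _, hFeq⟩ := hF
    rw [hFeq]; exact fun y hy => hy.1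
  have hexp1 : IsSphExposedFace d (sphPolar d K) (conjFace d K F) := conj_exposed hKs hc hF
  have hconj : conjFace d (sphPolar d K) (conjFace d K F) = F := conj_conj hbip hF
  refine ⟨hexp1, ?_, ?_, ?_, hconj, ?_, ?_, ?_⟩
  · -- conjFace ≠ sphPolar
    intro heq
    obtain ⟨y₁, hy₁⟩ := hF.1
    have hmc : -c ∈ sphPolar d K := by
      refine ⟨?_, ?_⟩
      · rw [mem_uSphere', norm_neg]; exact mem_uSphere'.mp hcs
      · intro y hy; rw [inner_neg_left]; linarith [hc y hy]
    rw [← heq] at hmc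
    have h1 := hmc.2 y₁ hy₁
    rw [inner_neg_left] at h1
    have h2 := hc y₁ (hFK hy₁)
    linarith
  · -- intersection formula
    ext x
    simp only [mem_iInter, mem_inter_iff, mem_setOf_eq]
    constructor
    · rintro ⟨hx1, hx2⟩
      intro y hy
      exact ⟨⟨hx1.1, hx2 y hy⟩, hx1⟩
    · intro h
      obtain ⟨y₁, hy₁⟩ := hF.1
      exact ⟨(h y₁ hy₁).2, fun y hy => (h y hy).1.2⟩
  · -- supporting hemispheres
    intro y hy x hx
    exact hx.2 y (hFK hy)
  · -- MapsTo
    intro G hG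
    exact conj_exposed hKs hc hG
  · -- InjOn
    intro G₁ h₁ G₂ h₂ heq
    have e1 := conj_conj hbip h₁
    have e2 := conj_conj hbip h₂
    rw [← e1, ← e2, heq]
  · -- SurjOn
    intro H hH
    have hbip3 : sphPolar d (sphPolar d (sphPolar d K)) = sphPolar d K :=
      congrArg (sphPolar d) hbip
    have hGexp := conj_exposed (d := d) (L := sphPolar d K)
      (fun x hx => hx.1) hpolc hH
    rw [hbip] at hGexp
    have hHeq := conj_conj hbip3 hH
    rw [hbip] at hHeq
    exact ⟨conjFace d (sphPolar d K) H, hGexp, hHeq⟩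
end
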